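/- arXiv:2102.05925 — 4 statements merged into one kernel-verified Lean document; each statement's English description precedes it below -/
import Mathlib

section
/- Let b ≥ 2 be an integer and ω ∈ [0,1). Then ω is normal in base b if and only if the sequence (b^n·ω)_{n≥0} is uniformly distributed modulo 1. -/
open Filter Topology

/-- The base-`b` digit sequence of `ω`: `d n = ⌊ω * b^(n+1)⌋ mod b`. -/
noncomputable def digitSeq (b : ℕ) (ω : ℝ) (n : ℕ) : ℕ :=
  (⌊ω * (b : ℝ) ^ (n + 1)⌋ % (b : ℤ)).toNat

/-- The string `s` has density `ε` in the digit sequence `d`: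
`(1/m) * #{i : i + |s| ≤ m and d (i+j) = s j for all j < |s|} → ε` as `m → ∞`. -/
def HasStrDensity (d : ℕ → ℕ) (s : List ℕ) (ε : ℝ) : Prop :=
  Tendsto
    (fun m : ℕ =>
      (((Finset.range m).filter fun i =>
          i + s.length ≤ m ∧ ∀ j ∈ Finset.range s.length, d (i + j) = s.getD j 0).card : ℝ) / m)
    atTop (nhds ε)

/-- `ω` is normal in base `b`: every nonempty string of base-`b` digits of length `k`
has density `b⁻ᵏ` in the base-`b` digit sequence of `ω`. -/
def IsNormal (b : ℕ) (ω : ℝ) : Prop :=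
  ∀ s : List ℕ, 1 ≤ s.length → (∀ x ∈ s, x < b) →
    HasStrDensity (digitSeq b ω) s (((b : ℝ) ^ s.length)⁻¹)

open scoped Classical in
/-- The sequence `a` is uniformly distributed modulo 1. -/
def UnifDistMod1 (a : ℕ → ℝ) : Prop :=
  ∀ u v : ℝ, 0 ≤ u → u < v → v ≤ 1 →
    Tendsto
      (fun N : ℕ =>
        (((Finset.range N).filter fun n =>
            u ≤ Int.fract (a n) ∧ Int.fract (a n) < v).card : ℝ) / N)
      atTop (nhds (v - u))

namespace WallProof

open scoped Classical

noncomputable def xf (b : ℕ) (ω : ℝ) (i : ℕ) : ℝ := Int.fract ((b:ℝ)^i * ω)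

variable {b : ℕ} {ω : ℝ}

lemma xf_nonneg (i : ℕ) : 0 ≤ xf b ω i := Int.fract_nonneg _
lemma xf_lt_one (i : ℕ) : xf b ω i < 1 := Int.fract_lt_one _

lemma fract_xf_mul_pow (i k : ℕ) :
    Int.fract (xf b ω i * (b:ℝ)^k) = xf b ω (i+k) := by
  have : xf b ω i * (b:ℝ)^k = (b:ℝ)^(i+k) * ω - ((⌊(b:ℝ)^i * ω⌋ * (b:ℕ)^k : ℤ) : ℝ) := by
    unfold xf Int.fract
    push_cast
    ring
  rw [this, Int.fract_sub_intCast]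
  rfl

lemma floor_xf_mul_pow_nonneg (i k : ℕ) : 0 ≤ ⌊xf b ω i * (b:ℝ)^k⌋ :=
  Int.floor_nonneg.2 (mul_nonneg (xf_nonneg i) (by positivity))

lemma floor_xf_mul_pow_lt (hb : 2 ≤ b) (i k : ℕ) : ⌊xf b ω i * (b:ℝ)^k⌋ < (b:ℤ)^k := by
  have hbk : (0:ℝ) < (b:ℝ)^k := by positivity
  have : xf b ω i * (b:ℝ)^k < 1 * (b:ℝ)^k :=
    mul_lt_mul_of_pos_right (xf_lt_one i) hbk
  rw [Int.floor_lt]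
  push_cast
  linarith

lemma floor_xf_pow_succ (i k : ℕ) :
    ⌊xf b ω i * (b:ℝ)^(k+1)⌋ = b * ⌊xf b ω i * (b:ℝ)^k⌋ + ⌊xf b ω (i+k) * (b:ℝ)⌋ := by
  have key : xf b ω i * (b:ℝ)^(k+1) =
      Int.fract (xf b ω i * (b:ℝ)^k) * b + ((⌊xf b ω i * (b:ℝ)^k⌋ * b : ℤ) : ℝ) := by
    rw [Int.fract]
    push_cast
    ring
  rw [key, Int.floor_add_intCast, fract_xf_mul_pow]
  ring

lemma digit_eq_floor (hb : 2 ≤ b) (n : ℕ) :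
    (digitSeq b ω n : ℤ) = ⌊xf b ω n * (b:ℝ)⌋ := by
  have key : ω * (b:ℝ)^(n+1) = xf b ω n * (b:ℝ) + ((⌊(b:ℝ)^n * ω⌋ * b : ℤ) : ℝ) := by
    unfold xf Int.fract
    push_cast
    ring
  have hfl : ⌊ω * (b:ℝ)^(n+1)⌋ = ⌊xf b ω n * (b:ℝ)⌋ + ⌊(b:ℝ)^n * ω⌋ * b := by
    rw [key, Int.floor_add_intCast]
  have h0 : 0 ≤ ⌊xf b ω n * (b:ℝ)⌋ := by
    have := floor_xf_mul_pow_nonneg (b := b) (ω := ω) n 1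
    simpa using this
  have h1 : ⌊xf b ω n * (b:ℝ)⌋ < b := by
    have := floor_xf_mul_pow_lt (b := b) (ω := ω) hb n 1
    simpa using this
  unfold digitSeq
  rw [hfl, Int.add_mul_emod_self_right, Int.emod_eq_of_lt h0 h1, Int.toNat_of_nonneg h0]

def val (b : ℕ) (s : List ℕ) : ℕ := s.foldl (fun a d => a * b + d) 0

lemma val_append (s : List ℕ) (a : ℕ) : val b (s ++ [a]) = val b s * b + a := by
  simp [val, List.foldl_append]

lemma val_lt (hb : 2 ≤ b) (s : List ℕ) (h : ∀ x ∈ s, x < b) : val b s < b ^ s.length := by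
  induction s using List.reverseRecOn with
  | nil => simpa [val] using by omega
  | append_singleton t a ih =>
    have ht : val b t < b ^ t.length := ih (fun x hx => h x (by simp [hx]))
    have ha : a < b := h a (by simp)
    rw [val_append]
    simp only [List.length_append, List.length_singleton]
    have : val b t * b + a < b ^ t.length * b := by nlinarith
    calc val b t * b + a < b ^ t.length * b := this
      _ = b ^ (t.length + 1) := by ring

lemma euclid_unique {b p q r a : ℤ} (hb : 0 < b) (hr0 : 0 ≤ r) (hrb : r < b)
    (ha0 : 0 ≤ a) (hab : a < b) (h : b*p + r = b*q + a) : p = q ∧ r = a := by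
  have hd : b ∣ (r - a) := ⟨q - p, by linarith [mul_sub b q p]⟩
  have habs : |r - a| < b := abs_lt.2 ⟨by linarith, by linarith⟩
  have hra : r - a = 0 := Int.eq_zero_of_abs_lt_dvd hd habs
  have hra' : r = a := by linarith
  refine ⟨?_, hra'⟩
  have : b * p = b * q := by linarith
  exact mul_left_cancel₀ (ne_of_gt hb) this

lemma digits_match_iff (hb : 2 ≤ b) (s : List ℕ) (hs : ∀ x ∈ s, x < b) (i : ℕ) :
    (∀ j ∈ Finset.range s.length, digitSeq b ω (i + j) = s.getD j 0) ↔
      ⌊xf b ω i * (b:ℝ)^s.length⌋ = (val b s : ℤ) := by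
  induction s using List.reverseRecOn with
  | nil =>
    simp only [List.length_nil, Finset.range_zero, Finset.notMem_empty, pow_zero, mul_one,
      IsEmpty.forall_iff, forall_const, true_iff, val, List.foldl_nil, Nat.cast_zero]
    rw [Int.floor_eq_zero_iff]
    exact ⟨xf_nonneg i, by simpa using xf_lt_one (b := b) (ω := ω) i⟩
  | append_singleton t a ih =>
    have ih' := ih (fun x hx => hs x (by simp [hx]))
    have hlen : (t ++ [a]).length = t.length + 1 := by simp
    have ha : a < b := hs a (by simp)
    have hb0 : (0:ℤ) < b := by exact_mod_cast Nat.lt_of_lt_of_le Nat.zero_lt_two hb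
    constructor
    · intro h
      have h1 : ∀ j ∈ Finset.range t.length, digitSeq b ω (i + j) = t.getD j 0 := by
        intro j hj
        have hjlt : j < t.length := Finset.mem_range.1 hj
        have := h j (by rw [hlen]; exact Finset.mem_range.2 (Nat.lt_succ_of_lt hjlt))
        rwa [List.getD_append _ _ _ _ hjlt] at this
      have h2 : digitSeq b ω (i + t.length) = a := by
        have := h t.length (by rw [hlen]; exact Finset.mem_range.2 (Nat.lt_succ_self _))
        rwa [show (t ++ [a]).getD t.length 0 = a by
          rw [List.getD_eq_getElem _ _ (by simp)]; simp] at this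
      rw [hlen, floor_xf_pow_succ, val_append, ih'.1 h1]
      have : (⌊xf b ω (i + t.length) * (b:ℝ)⌋ : ℤ) = (a : ℤ) := by
        rw [← digit_eq_floor hb, h2]
      rw [this]
      push_cast
      ring
    · intro h
      rw [hlen, floor_xf_pow_succ, val_append] at h
      have hcast : ((val b t * b + a : ℕ) : ℤ) = b * (val b t : ℤ) + a := by push_cast; ring
      rw [hcast] at h
      have hd0 : 0 ≤ ⌊xf b ω (i + t.length) * (b:ℝ)⌋ := by
        have := floor_xf_mul_pow_nonneg (b := b) (ω := ω) (i + t.length) 1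
        simpa using this
      have hd1 : ⌊xf b ω (i + t.length) * (b:ℝ)⌋ < b := by
        have := floor_xf_mul_pow_lt (b := b) (ω := ω) hb (i + t.length) 1
        simpa using this
      obtain ⟨he1, he2⟩ := euclid_unique hb0 hd0 hd1 (by positivity)
        (by exact_mod_cast ha) h
      have h1 := ih'.2 he1
      have h2 : digitSeq b ω (i + t.length) = a := by
        have := digit_eq_floor (ω := ω) hb (i + t.length)
        omega
      intro j hj
      rw [hlen] at hj
      have hjlt : j < t.length + 1 := Finset.mem_range.1 hj
      rcases Nat.lt_or_ge j t.length with hlt | hge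
      · rw [List.getD_append _ _ _ _ hlt]
        exact h1 j (Finset.mem_range.2 hlt)
      · have hj' : j = t.length := by omega
        subst hj'
        rw [show (t ++ [a]).getD t.length 0 = a by
          rw [List.getD_eq_getElem _ _ (by simp)]; simp]
        exact h2

def msdigits (b : ℕ) : ℕ → ℕ → List ℕ
  | 0, _ => []
  | (k+1), j => msdigits b k (j / b) ++ [j % b]

lemma msdigits_length (k j : ℕ) : (msdigits b k j).length = k := by
  induction k generalizing j with
  | zero => rfl
  | succ k ih => simp [msdigits, ih]

lemma msdigits_lt (hb : 2 ≤ b) (k j : ℕ) : ∀ x ∈ msdigits b k j, x < b := by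
  induction k generalizing j with
  | zero => simp [msdigits]
  | succ k ih =>
    intro x hx
    simp only [msdigits, List.mem_append, List.mem_singleton] at hx
    rcases hx with hx | hx
    · exact ih _ x hx
    · subst hx; exact Nat.mod_lt _ (by omega)

lemma val_msdigits (hb : 2 ≤ b) (k j : ℕ) (h : j < b ^ k) : val b (msdigits b k j) = j := by
  induction k generalizing j with
  | zero => simp at h; simp [h, msdigits, val]
  | succ k ih =>
    have hdiv : j / b < b ^ k := by
      rw [Nat.div_lt_iff_lt_mul (by omega)]
      calc j < b ^ (k+1) := h
        _ = b ^ k * b := by ring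
    rw [msdigits, val_append, ih _ hdiv]
    exact Nat.div_add_mod' j b

/-! ### Counting lemmas -/

lemma tendsto_div_of_abs_sub_le {f g : ℕ → ℝ} {L : ℝ} (C : ℝ)
    (h : ∀ m, |g m - f m| ≤ C) (hf : Tendsto (fun m : ℕ => f m / m) atTop (𝓝 L)) :
    Tendsto (fun m : ℕ => g m / m) atTop (𝓝 L) := by
  have hdiff : Tendsto (fun m : ℕ => (g m - f m) / m) atTop (𝓝 0) := by
    apply squeeze_zero_norm (fun m => ?_) (tendsto_const_div_atTop_nhds_zero_nat C)
    rw [norm_div, Real.norm_natCast, Real.norm_eq_abs]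
    exact div_le_div_of_nonneg_right (h m) (Nat.cast_nonneg m)
  have heq : (fun m : ℕ => g m / m) = fun m : ℕ => f m / m + (g m - f m) / m := by
    funext m
    rw [← add_div]
    ring_nf
  rw [heq]
  simpa using hf.add hdiff

lemma count_le (k m : ℕ) (P : ℕ → Prop) [DecidablePred P] :
    ((Finset.range m).filter (fun i => i + k ≤ m ∧ P i)).card ≤
        ((Finset.range m).filter P).card ∧
      ((Finset.range m).filter P).card ≤
        ((Finset.range m).filter (fun i => i + k ≤ m ∧ P i)).card + k := by
  constructor
  · apply Finset.card_le_card
    intro i hi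
    rw [Finset.mem_filter] at hi ⊢
    exact ⟨hi.1, hi.2.2⟩
  · have hsub : (Finset.range m).filter P ⊆
        ((Finset.range m).filter (fun i => i + k ≤ m ∧ P i)) ∪ Finset.Ico (m - k) m := by
      intro i hi
      rw [Finset.mem_filter, Finset.mem_range] at hi
      rcases le_or_gt (i + k) m with hle | hgt
      · exact Finset.mem_union_left _ (Finset.mem_filter.2 ⟨Finset.mem_range.2 hi.1, hle, hi.2⟩)
      · exact Finset.mem_union_right _ (Finset.mem_Ico.2 ⟨by omega, hi.1⟩)
    calc ((Finset.range m).filter P).card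
        ≤ (((Finset.range m).filter (fun i => i + k ≤ m ∧ P i)) ∪ Finset.Ico (m - k) m).card :=
          Finset.card_le_card hsub
      _ ≤ ((Finset.range m).filter (fun i => i + k ≤ m ∧ P i)).card + (Finset.Ico (m - k) m).card :=
          Finset.card_union_le _ _
      _ ≤ _ := by rw [Nat.card_Ico]; omega

lemma tendsto_count_iff (k : ℕ) (P : ℕ → Prop) [DecidablePred P] (L : ℝ) :
    Tendsto (fun m : ℕ =>
        (((Finset.range m).filter (fun i => i + k ≤ m ∧ P i)).card : ℝ) / m) atTop (𝓝 L) ↔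
      Tendsto (fun m : ℕ => (((Finset.range m).filter P).card : ℝ) / m) atTop (𝓝 L) := by
  have key : ∀ m : ℕ, |(((Finset.range m).filter P).card : ℝ) -
      (((Finset.range m).filter (fun i => i + k ≤ m ∧ P i)).card : ℝ)| ≤ k := by
    intro m
    obtain ⟨h1, h2⟩ := count_le k m P
    have h1' : ((((Finset.range m).filter (fun i => i + k ≤ m ∧ P i)).card : ℕ) : ℝ) ≤
        (((Finset.range m).filter P).card : ℕ) := by exact_mod_cast h1
    have h2' : ((((Finset.range m).filter P).card : ℕ) : ℝ) ≤
        ((((Finset.range m).filter (fun i => i + k ≤ m ∧ P i)).card : ℕ) : ℝ) + k := by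
      exact_mod_cast h2
    rw [abs_le]
    constructor <;> linarith
  constructor
  · intro h
    exact tendsto_div_of_abs_sub_le (k : ℝ) key h
  · intro h
    refine tendsto_div_of_abs_sub_le (k : ℝ) (fun m => ?_) h
    rw [abs_sub_comm]
    exact key m

lemma floor_count_empty (hb : 2 ≤ b) (k : ℕ) (j : ℤ) (hj : j < 0 ∨ (b:ℤ)^k ≤ j) (m : ℕ) :
    (Finset.range m).filter (fun n => ⌊xf b ω n * (b:ℝ)^k⌋ = j) = ∅ := by
  apply Finset.filter_false_of_mem
  intro n _
  have h0 := floor_xf_mul_pow_nonneg (b := b) (ω := ω) n k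
  have h1 := floor_xf_mul_pow_lt (b := b) (ω := ω) hb n k
  intro he
  rcases hj with hj | hj <;> omega

lemma floor_eq_iff_Ico (hb : 2 ≤ b) (k : ℕ) (j : ℤ) (i : ℕ) :
    ⌊xf b ω i * (b:ℝ)^k⌋ = j ↔
      ((j:ℝ)/(b:ℝ)^k ≤ xf b ω i ∧ xf b ω i < ((j:ℝ)+1)/(b:ℝ)^k) := by
  have hbk : (0:ℝ) < (b:ℝ)^k := by positivity
  rw [Int.floor_eq_iff, div_le_iff₀ hbk, lt_div_iff₀ hbk]

set_option maxHeartbeats 1000000 in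
/-- Key consequence of normality: counting floor values. -/
lemma normal_floor_density (hb : 2 ≤ b) (hn : IsNormal b ω) {k : ℕ} (hk : 1 ≤ k) {j : ℤ}
    (h0 : 0 ≤ j) (hjk : j < (b:ℤ)^k) :
    Tendsto (fun m : ℕ =>
        (((Finset.range m).filter (fun n => ⌊xf b ω n * (b:ℝ)^k⌋ = j)).card : ℝ) / m)
      atTop (𝓝 (((b:ℝ)^k)⁻¹)) := by
  set s := msdigits b k j.toNat with hs
  have hlen : s.length = k := msdigits_length _ _
  have hslt : ∀ x ∈ s, x < b := msdigits_lt hb _ _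
  have hjn : j.toNat < b ^ k := by
    have h2 : (j.toNat : ℤ) < ((b ^ k : ℕ) : ℤ) := by
      rw [Int.toNat_of_nonneg h0]
      push_cast
      exact hjk
    exact_mod_cast h2
  have hval : (val b s : ℤ) = j := by
    rw [hs, val_msdigits hb k j.toNat hjn, Int.toNat_of_nonneg h0]
  have hden : Tendsto (fun m : ℕ =>
      (((Finset.range m).filter fun i =>
          i + s.length ≤ m ∧ ∀ j' ∈ Finset.range s.length,
            digitSeq b ω (i + j') = s.getD j' 0).card : ℝ) / m)
      atTop (𝓝 (((b : ℝ) ^ s.length)⁻¹)) := hn s (by rw [hlen]; exact hk) hslt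
  have hfe : ∀ m : ℕ, ((Finset.range m).filter fun i =>
        i + s.length ≤ m ∧ ∀ j' ∈ Finset.range s.length, digitSeq b ω (i + j') = s.getD j' 0)
      = ((Finset.range m).filter fun i => i + k ≤ m ∧ ⌊xf b ω i * (b:ℝ)^k⌋ = j) := by
    intro m
    apply Finset.filter_congr
    intro i _
    rw [hlen]
    constructor
    · rintro ⟨hle, hmatch⟩
      refine ⟨hle, ?_⟩
      have := (digits_match_iff hb s hslt i).1 (by rwa [hlen])
      rw [hlen] at this
      rw [this, hval]
    · rintro ⟨hle, hfloor⟩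
      refine ⟨hle, ?_⟩
      have h9 : ⌊xf b ω i * (b:ℝ)^s.length⌋ = (val b s : ℤ) := by
        rw [hlen, hfloor, hval]
      have := (digits_match_iff hb s hslt i).2 h9
      rwa [hlen] at this
  have hden2 : Tendsto (fun m : ℕ =>
      (((Finset.range m).filter fun i => i + k ≤ m ∧ ⌊xf b ω i * (b:ℝ)^k⌋ = j).card : ℝ) / m)
      atTop (𝓝 (((b : ℝ) ^ s.length)⁻¹)) :=
    Filter.Tendsto.congr (fun m => by rw [hfe m]) hden
  rw [hlen] at hden2
  exact (tendsto_count_iff k (fun n => ⌊xf b ω n * (b:ℝ)^k⌋ = j) (((b:ℝ)^k)⁻¹)).1 hden2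


set_option maxHeartbeats 1000000 in
lemma normal_to_ud (hb : 2 ≤ b) (hn : IsNormal b ω) (u v : ℝ) (hu : 0 ≤ u) (huv : u < v)
    (hv1 : v ≤ 1) :
    Tendsto (fun N : ℕ => (((Finset.range N).filter fun n =>
        u ≤ xf b ω n ∧ xf b ω n < v).card : ℝ) / N) atTop (𝓝 (v - u)) := by
  have hb1 : (1:ℝ) < b := by exact_mod_cast Nat.lt_of_lt_of_le Nat.one_lt_two hb
  rw [Metric.tendsto_atTop]
  intro ε hε
  have hmin : 0 < min (ε/4) (v-u) := lt_min (by linarith) (by linarith)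
  obtain ⟨k₀, hk₀⟩ := pow_unbounded_of_one_lt ((2:ℝ)/min (ε/4) (v-u)) hb1
  set k := k₀ + 1 with hkdef
  have hk1 : 1 ≤ k := Nat.le_add_left _ _
  have hbk : (0:ℝ) < (b:ℝ)^k := by positivity
  have hbkne : ((b:ℝ)^k) ≠ 0 := ne_of_gt hbk
  have hkk : (2:ℝ)/min (ε/4) (v-u) < (b:ℝ)^k :=
    lt_of_lt_of_le hk₀ (pow_le_pow_right₀ (le_of_lt hb1) (Nat.le_succ _))
  have hkey : (2:ℝ)/(b:ℝ)^k < min (ε/4) (v-u) := by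
    rw [div_lt_iff₀ hbk]
    rw [div_lt_iff₀ hmin] at hkk
    nlinarith
  have hek : (2:ℝ)/(b:ℝ)^k < ε/4 := lt_of_lt_of_le hkey (min_le_left _ _)
  have hvuk : (2:ℝ)/(b:ℝ)^k < v - u := lt_of_lt_of_le hkey (min_le_right _ _)
  have hvuk' : (2:ℝ) < (v - u) * (b:ℝ)^k := by rwa [div_lt_iff₀ hbk] at hvuk
  set a := ⌈u * (b:ℝ)^k⌉ with hadef
  set c := ⌊v * (b:ℝ)^k⌋ with hcdef
  have ha0 : 0 ≤ a := Int.ceil_nonneg (by positivity)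
  have hua : u * (b:ℝ)^k ≤ (a:ℝ) := Int.le_ceil _
  have hau : (a:ℝ) < u * (b:ℝ)^k + 1 := Int.ceil_lt_add_one _
  have hcv : (c:ℝ) ≤ v * (b:ℝ)^k := Int.floor_le _
  have hvc : v * (b:ℝ)^k - 1 < (c:ℝ) := Int.sub_one_lt_floor _
  have hcb : c ≤ (b:ℤ)^k := by
    have h1 : (c:ℝ) ≤ (((b:ℤ)^k : ℤ) : ℝ) := by
      push_cast
      nlinarith
    exact_mod_cast h1
  have hac : a ≤ c := by
    have h1 : (a:ℝ) < (c:ℝ) := by nlinarith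
    exact le_of_lt (by exact_mod_cast h1)
  -- disjointness
  have hdisj : ∀ m : ℕ, ∀ x ∈ Finset.Ico a c, ∀ y ∈ Finset.Ico a c, x ≠ y →
      Disjoint ((Finset.range m).filter (fun n => ⌊xf b ω n * (b:ℝ)^k⌋ = x))
        ((Finset.range m).filter (fun n => ⌊xf b ω n * (b:ℝ)^k⌋ = y)) := by
    intro m x _ y _ hxy
    rw [Finset.disjoint_left]
    intro n hn hn'
    rw [Finset.mem_filter] at hn hn'
    exact hxy (by omega)
  -- lower bound on the count
  have hlow : ∀ m : ℕ, (∑ j ∈ Finset.Ico a c,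
      (((Finset.range m).filter (fun n => ⌊xf b ω n * (b:ℝ)^k⌋ = j)).card)) ≤
      ((Finset.range m).filter (fun n => u ≤ xf b ω n ∧ xf b ω n < v)).card := by
    intro m
    rw [← Finset.card_biUnion (hdisj m)]
    apply Finset.card_le_card
    intro n hn
    rw [Finset.mem_biUnion] at hn
    obtain ⟨j, hj, hnj⟩ := hn
    rw [Finset.mem_Ico] at hj
    rw [Finset.mem_filter] at hnj ⊢
    obtain ⟨hfl1, hfl2⟩ := (floor_eq_iff_Ico hb k j n).1 hnj.2
    refine ⟨hnj.1, ?_, ?_⟩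
    · have hja : (a:ℝ) ≤ (j:ℝ) := by exact_mod_cast hj.1
      have h1 : u ≤ (j:ℝ)/(b:ℝ)^k := by
        rw [le_div_iff₀ hbk]
        linarith
      linarith
    · have hjc : (j:ℝ) + 1 ≤ (c:ℝ) := by exact_mod_cast hj.2
      have h1 : ((j:ℝ)+1)/(b:ℝ)^k ≤ v := by
        rw [div_le_iff₀ hbk]
        linarith
      linarith
  -- upper bound on the count
  have hupp : ∀ m : ℕ, ((Finset.range m).filter (fun n => u ≤ xf b ω n ∧ xf b ω n < v)).card ≤
      ∑ j ∈ Finset.Ico (a-1) (c+1),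
        (((Finset.range m).filter (fun n => ⌊xf b ω n * (b:ℝ)^k⌋ = j)).card) := by
    intro m
    refine le_trans (Finset.card_le_card ?_) Finset.card_biUnion_le
    intro n hn
    rw [Finset.mem_filter] at hn
    rw [Finset.mem_biUnion]
    refine ⟨⌊xf b ω n * (b:ℝ)^k⌋, ?_, Finset.mem_filter.2 ⟨hn.1, rfl⟩⟩
    rw [Finset.mem_Ico]
    constructor
    · have h1 : a ≤ ⌈xf b ω n * (b:ℝ)^k⌉ :=
        Int.ceil_le_ceil (mul_le_mul_of_nonneg_right hn.2.1 (le_of_lt hbk))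
      have h2 := Int.ceil_le_floor_add_one (xf b ω n * (b:ℝ)^k)
      omega
    · have h1 : xf b ω n * (b:ℝ)^k ≤ v * (b:ℝ)^k :=
        mul_le_mul_of_nonneg_right (le_of_lt hn.2.2) (le_of_lt hbk)
      have h2 : ⌊xf b ω n * (b:ℝ)^k⌋ ≤ c := Int.floor_le_floor h1
      omega
  -- limits of the sums
  have hS1 : Tendsto (fun m : ℕ => ((∑ j ∈ Finset.Ico a c,
      (((Finset.range m).filter (fun n => ⌊xf b ω n * (b:ℝ)^k⌋ = j)).card) : ℕ) : ℝ) / m)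
      atTop (𝓝 (((Finset.Ico a c).card : ℝ) * ((b:ℝ)^k)⁻¹)) := by
    have h1 : Tendsto (fun m : ℕ => ∑ j ∈ Finset.Ico a c,
        ((((Finset.range m).filter (fun n => ⌊xf b ω n * (b:ℝ)^k⌋ = j)).card : ℝ)) / m)
        atTop (𝓝 (∑ _j ∈ Finset.Ico a c, ((b:ℝ)^k)⁻¹)) := by
      refine tendsto_finset_sum _ (fun j hj => ?_)
      rw [Finset.mem_Ico] at hj
      exact normal_floor_density hb hn hk1 (by omega) (by omega)
    rw [Finset.sum_const, nsmul_eq_mul] at h1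
    exact Filter.Tendsto.congr (fun m => by rw [Nat.cast_sum, Finset.sum_div]) h1
  have hS2 : Tendsto (fun m : ℕ => ((∑ j ∈ Finset.Ico (a-1) (c+1),
      (((Finset.range m).filter (fun n => ⌊xf b ω n * (b:ℝ)^k⌋ = j)).card) : ℕ) : ℝ) / m)
      atTop (𝓝 (∑ j ∈ Finset.Ico (a-1) (c+1),
        (if 0 ≤ j ∧ j < (b:ℤ)^k then ((b:ℝ)^k)⁻¹ else 0))) := by
    have h1 : Tendsto (fun m : ℕ => ∑ j ∈ Finset.Ico (a-1) (c+1),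
        ((((Finset.range m).filter (fun n => ⌊xf b ω n * (b:ℝ)^k⌋ = j)).card : ℝ)) / m)
        atTop (𝓝 (∑ j ∈ Finset.Ico (a-1) (c+1),
          (if 0 ≤ j ∧ j < (b:ℤ)^k then ((b:ℝ)^k)⁻¹ else 0))) := by
      refine tendsto_finset_sum _ (fun j _ => ?_)
      by_cases hj : 0 ≤ j ∧ j < (b:ℤ)^k
      · rw [if_pos hj]
        exact normal_floor_density hb hn hk1 hj.1 hj.2
      · rw [if_neg hj]
        have he : ∀ m : ℕ, (Finset.range m).filter (fun n => ⌊xf b ω n * (b:ℝ)^k⌋ = j) = ∅ :=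
          floor_count_empty hb k j (by omega)
        have : (fun m : ℕ => ((((Finset.range m).filter
            (fun n => ⌊xf b ω n * (b:ℝ)^k⌋ = j)).card : ℝ)) / m) = fun _ => (0:ℝ) := by
          funext m
          rw [he m]
          simp
        rw [this]
        exact tendsto_const_nhds
    exact Filter.Tendsto.congr (fun m => by rw [Nat.cast_sum, Finset.sum_div]) h1
  -- cardinalities
  have hcard1 : ((Finset.Ico a c).card : ℝ) = (c:ℝ) - (a:ℝ) := by
    have h3 : (((c - a).toNat : ℕ) : ℝ) = ((c - a : ℤ) : ℝ) := by
      exact_mod_cast Int.toNat_of_nonneg (by omega : (0:ℤ) ≤ c - a)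
    rw [Int.card_Ico, h3]
    push_cast
    ring
  have hcard2 : ((Finset.Ico (a-1) (c+1)).card : ℝ) = (c:ℝ) - (a:ℝ) + 2 := by
    have h3 : (((c + 1 - (a - 1)).toNat : ℕ) : ℝ) = ((c + 1 - (a - 1) : ℤ) : ℝ) := by
      exact_mod_cast Int.toNat_of_nonneg (by omega : (0:ℤ) ≤ c + 1 - (a - 1))
    rw [Int.card_Ico, h3]
    push_cast
    ring
  -- bound on the upper limit
  have hL2 : (∑ j ∈ Finset.Ico (a-1) (c+1), (if 0 ≤ j ∧ j < (b:ℤ)^k then ((b:ℝ)^k)⁻¹ else 0))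
      ≤ ((c:ℝ) - (a:ℝ) + 2) * ((b:ℝ)^k)⁻¹ := by
    rw [← hcard2]
    calc (∑ j ∈ Finset.Ico (a-1) (c+1), (if 0 ≤ j ∧ j < (b:ℤ)^k then ((b:ℝ)^k)⁻¹ else 0))
        ≤ ∑ _j ∈ Finset.Ico (a-1) (c+1), ((b:ℝ)^k)⁻¹ := by
          refine Finset.sum_le_sum (fun j _ => ?_)
          split
          · exact le_refl _
          · positivity
      _ = ((Finset.Ico (a-1) (c+1)).card : ℝ) * ((b:ℝ)^k)⁻¹ := by
          rw [Finset.sum_const, nsmul_eq_mul]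
  -- numeric bounds
  have hexp1 : ((v-u) * (b:ℝ)^k - 2) * ((b:ℝ)^k)⁻¹ = (v-u) - 2*((b:ℝ)^k)⁻¹ := by
    field_simp
  have hexp2 : ((v-u) * (b:ℝ)^k + 2) * ((b:ℝ)^k)⁻¹ = (v-u) + 2*((b:ℝ)^k)⁻¹ := by
    field_simp
  have hIpos : (0:ℝ) < ((b:ℝ)^k)⁻¹ := by positivity
  have h2I : 2*((b:ℝ)^k)⁻¹ < ε/4 := by
    rw [div_eq_mul_inv] at hek
    linarith [hek]
  have hL1lb : (v - u) - ε/4 < ((c:ℝ) - (a:ℝ)) * ((b:ℝ)^k)⁻¹ := by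
    have hca : (v-u) * (b:ℝ)^k - 2 < (c:ℝ) - (a:ℝ) := by nlinarith
    have := mul_lt_mul_of_pos_right hca hIpos
    rw [hexp1] at this
    linarith
  have hL2ub : ((c:ℝ) - (a:ℝ) + 2) * ((b:ℝ)^k)⁻¹ < (v - u) + ε/4 + ε/4 := by
    have hca : (c:ℝ) - (a:ℝ) + 2 ≤ (v-u) * (b:ℝ)^k + 2 := by nlinarith
    have := mul_le_mul_of_nonneg_right hca (le_of_lt hIpos)
    rw [hexp2] at this
    linarith
  -- eventual bounds
  have hev1 : ∀ᶠ m : ℕ in atTop, (v - u) - ε/4 < ((∑ j ∈ Finset.Ico a c,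
      (((Finset.range m).filter (fun n => ⌊xf b ω n * (b:ℝ)^k⌋ = j)).card) : ℕ) : ℝ) / m := by
    apply hS1.eventually
    apply eventually_gt_nhds
    rw [hcard1]
    exact hL1lb
  have hev2 : ∀ᶠ m : ℕ in atTop, ((∑ j ∈ Finset.Ico (a-1) (c+1),
      (((Finset.range m).filter (fun n => ⌊xf b ω n * (b:ℝ)^k⌋ = j)).card) : ℕ) : ℝ) / m
        < (v - u) + ε/4 + ε/4 := by
    exact hS2.eventually (eventually_lt_nhds (lt_of_le_of_lt hL2 hL2ub))
  have hfin : ∀ᶠ m : ℕ in atTop, dist (((((Finset.range m).filter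
      (fun n => u ≤ xf b ω n ∧ xf b ω n < v)).card : ℕ) : ℝ)/m) (v-u) < ε := by
    filter_upwards [hev1, hev2, eventually_ge_atTop 1] with m h1 h2 hm0
    · have hm : (0:ℝ) < m := by exact_mod_cast hm0
      have hlowR : ((∑ j ∈ Finset.Ico a c,
          (((Finset.range m).filter (fun n => ⌊xf b ω n * (b:ℝ)^k⌋ = j)).card) : ℕ) : ℝ) ≤
          ((((Finset.range m).filter (fun n => u ≤ xf b ω n ∧ xf b ω n < v)).card : ℕ) : ℝ) := by
        exact_mod_cast hlow m
      have huppR : ((((Finset.range m).filter (fun n => u ≤ xf b ω n ∧ xf b ω n < v)).card : ℕ) : ℝ)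
          ≤ ((∑ j ∈ Finset.Ico (a-1) (c+1),
          (((Finset.range m).filter (fun n => ⌊xf b ω n * (b:ℝ)^k⌋ = j)).card) : ℕ) : ℝ) := by
        exact_mod_cast hupp m
      have hd1 := div_le_div_of_nonneg_right hlowR (le_of_lt hm)
      have hd2 := div_le_div_of_nonneg_right huppR (le_of_lt hm)
      rw [Real.dist_eq, abs_lt]
      constructor <;> linarith
  rw [Filter.eventually_atTop] at hfin
  exact hfin

end WallProof

set_option maxHeartbeats 1000000 in
theorem normal_iff_unif_dist (b : ℕ) (hb : 2 ≤ b) (ω : ℝ)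
    (hω : ω ∈ Set.Ico (0 : ℝ) 1) :
    IsNormal b ω ↔ UnifDistMod1 (fun n : ℕ => (b : ℝ) ^ n * ω) := by
  constructor
  · intro hn u v hu huv hv1
    exact WallProof.normal_to_ud hb hn u v hu huv hv1
  · intro hud s hs1 hsb
    have hjk : WallProof.val b s < b ^ s.length := WallProof.val_lt hb s hsb
    have hbk : (0:ℝ) < (b:ℝ)^s.length := by positivity
    set jn := WallProof.val b s with hjdef
    have hj1 : ((jn:ℝ)+1) ≤ (b:ℝ)^s.length := by
      have h0 : ((jn+1 : ℕ) : ℝ) ≤ ((b^s.length : ℕ) : ℝ) := by exact_mod_cast hjk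
      push_cast at h0
      linarith
    have h := hud ((jn:ℝ)/(b:ℝ)^s.length) (((jn:ℝ)+1)/(b:ℝ)^s.length)
      (by positivity)
      ((div_lt_div_iff_of_pos_right hbk).2 (by linarith))
      (by rw [div_le_one hbk]; exact hj1)
    have hvu : ((jn:ℝ)+1)/(b:ℝ)^s.length - (jn:ℝ)/(b:ℝ)^s.length = ((b:ℝ)^s.length)⁻¹ := by
      field_simp
      ring
    rw [hvu] at h
    have hpred : ∀ n : ℕ, (((jn:ℝ)/(b:ℝ)^s.length ≤ Int.fract ((b:ℝ)^n * ω) ∧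
        Int.fract ((b:ℝ)^n * ω) < ((jn:ℝ)+1)/(b:ℝ)^s.length)) ↔
        ⌊WallProof.xf b ω n * (b:ℝ)^s.length⌋ = (jn:ℤ) := by
      intro n
      rw [WallProof.floor_eq_iff_Ico hb]
      push_cast
      exact Iff.rfl
    have he : ∀ N : ℕ, ((Finset.range N).filter fun n =>
          (jn:ℝ)/(b:ℝ)^s.length ≤ Int.fract ((b:ℝ)^n * ω) ∧
          Int.fract ((b:ℝ)^n * ω) < ((jn:ℝ)+1)/(b:ℝ)^s.length)
        = ((Finset.range N).filter fun n =>
            ⌊WallProof.xf b ω n * (b:ℝ)^s.length⌋ = (jn:ℤ)) := by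
      intro N
      exact Finset.filter_congr (fun n _ => hpred n)
    have h2 : Tendsto (fun N : ℕ => ((((Finset.range N).filter
        (fun n => ⌊WallProof.xf b ω n * (b:ℝ)^s.length⌋ = (jn:ℤ))).card : ℝ))/N) atTop
        (𝓝 (((b:ℝ)^s.length)⁻¹)) :=
      Filter.Tendsto.congr (fun N => by rw [← he N]) h
    have h3 := (WallProof.tendsto_count_iff s.length
      (fun n => ⌊WallProof.xf b ω n * (b:ℝ)^s.length⌋ = (jn:ℤ)) (((b:ℝ)^s.length)⁻¹)).2 h2
    show Tendsto (fun m : ℕ => (((Finset.range m).filter fun i =>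
        i + s.length ≤ m ∧ ∀ j ∈ Finset.range s.length,
          digitSeq b ω (i + j) = s.getD j 0).card : ℝ) / m) atTop (𝓝 (((b:ℝ)^s.length)⁻¹))
    refine Filter.Tendsto.congr (fun m => ?_) h3
    have e2 : ((Finset.range m).filter fun i =>
          i + s.length ≤ m ∧ ⌊WallProof.xf b ω i * (b:ℝ)^s.length⌋ = (jn:ℤ))
        = ((Finset.range m).filter fun i =>
          i + s.length ≤ m ∧ ∀ j ∈ Finset.range s.length,
            digitSeq b ω (i + j) = s.getD j 0) := by
      refine Finset.filter_congr (fun i _ => ?_)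
      refine and_congr_right (fun _ => ?_)
      rw [WallProof.digits_match_iff hb s hsb i]
    rw [e2]
end

section
/- Let b ≥ 2 be an integer and let ω = Σ_{i=0}^∞ (Σ_{j=0}^{2^{2i}−1} b^{−j})·b^{−2^{2i}}. Then for every n ≥ 1, the all-zeros string of length n has no density in the base-b digit sequence of ω: the limit as m → ∞ of (1/m)·#{i : i + n ≤ m and d(i+j) = 0 for all j < n} does not exist. In particular, ω is not b-Borel. -/
open Filter Topology

/-- `ω` is `b`-Borel: every finite string of base-`b` digits has a density. -/
def IsBorel (b : ℕ) (ω : ℝ) : Prop :=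
  ∀ s : List ℕ, (∀ x ∈ s, x < b) → ∃ ε : ℝ, HasStrDensity (digitSeq b ω) s ε

open Classical in
/-- indicator: position `p` carries digit 1 -/
noncomputable def cfun (p : ℕ) : ℕ :=
  if ∃ i, 4 ^ i ≤ p ∧ p < 2 * 4 ^ i then 1 else 0

lemma cfun_le_one (p : ℕ) : cfun p ≤ 1 := by
  unfold cfun; split <;> simp

lemma cfun_eq_one {p j : ℕ} (h1 : 4 ^ j ≤ p) (h2 : p < 2 * 4 ^ j) : cfun p = 1 := by
  unfold cfun; exact if_pos ⟨j, h1, h2⟩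

lemma cfun_eq_zero {p j : ℕ} (h1 : 2 * 4 ^ j ≤ p) (h2 : p < 4 ^ (j + 1)) : cfun p = 0 := by
  unfold cfun
  apply if_neg
  rintro ⟨l, hl1, hl2⟩
  rcases le_or_gt l j with h | h
  · have : (4:ℕ) ^ l ≤ 4 ^ j := Nat.pow_le_pow_right (by norm_num) h
    omega
  · have : (4:ℕ) ^ (j + 1) ≤ 4 ^ l := Nat.pow_le_pow_right (by norm_num) h
    omega

lemma cfun_zero : cfun 0 = 0 := by
  unfold cfun
  apply if_neg
  rintro ⟨i, h1, -⟩
  have : 0 < (4:ℕ) ^ i := Nat.pow_pos (by norm_num)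
  omega

lemma cfun_eq_one_elim {p : ℕ} (h : cfun p = 1) : ∃ j, 4 ^ j ≤ p ∧ p < 2 * 4 ^ j := by
  by_contra hc
  unfold cfun at h
  rw [if_neg hc] at h
  exact absurd h (by norm_num)

lemma summable_aux {b : ℕ} (hb : 2 ≤ b) :
    Summable (fun p => (cfun p : ℝ) * ((b : ℝ) ^ p)⁻¹) := by
  have hb2 : (2:ℝ) ≤ (b : ℝ) := by exact_mod_cast hb
  have hb0 : (0:ℝ) < b := by linarith
  apply Summable.of_nonneg_of_le (g := fun p => (cfun p : ℝ) * ((b : ℝ) ^ p)⁻¹)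
      (fun p => by positivity) (fun p => ?_)
      (summable_geometric_of_lt_one (r := (b : ℝ)⁻¹) (by positivity) (by
        rw [inv_lt_one_iff₀]; right; linarith))
  rw [inv_pow]
  calc (cfun p : ℝ) * ((b : ℝ) ^ p)⁻¹ ≤ 1 * ((b : ℝ) ^ p)⁻¹ := by
        apply mul_le_mul_of_nonneg_right
        · exact_mod_cast cfun_le_one p
        · positivity
    _ = ((b : ℝ) ^ p)⁻¹ := one_mul _

lemma tail_lt_one {b : ℕ} (hb : 2 ≤ b) (g : ℕ → ℕ) (hg : ∀ q, g q ≤ 1) (q0 : ℕ)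
    (h0 : g q0 = 0) :
    ∑' q : ℕ, (g q : ℝ) * ((b : ℝ) ^ (q + 1))⁻¹ < 1 := by
  classical
  have hb2 : (2:ℝ) ≤ (b : ℝ) := by exact_mod_cast hb
  have hb0 : (0:ℝ) < b := by linarith
  set r : ℝ := (b : ℝ)⁻¹ with hr
  have hrpos : 0 < r := by positivity
  have hr1 : r < 1 := by rw [hr, inv_lt_one_iff₀]; right; linarith
  have hr2 : r ≤ 1/2 := by
    rw [hr]
    rw [inv_eq_one_div]
    exact one_div_le_one_div_of_le (by norm_num) hb2
  have hgeom : Summable (fun q : ℕ => r ^ q) := summable_geometric_of_lt_one hrpos.le hr1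
  have hpow : ∀ q : ℕ, ((b : ℝ) ^ (q + 1))⁻¹ = r ^ q * r := by
    intro q
    rw [hr, pow_succ, mul_inv, inv_pow]
  have hSle : ∀ q : ℕ, (g q : ℝ) * ((b : ℝ) ^ (q + 1))⁻¹
      ≤ r ^ q * r - (if q = q0 then r ^ q0 * r else 0) := by
    intro q
    rw [hpow q]
    by_cases hq : q = q0
    · subst hq; rw [if_pos rfl, h0]; simp
    · rw [if_neg hq, sub_zero]
      calc (g q : ℝ) * (r ^ q * r) ≤ 1 * (r ^ q * r) := by
            apply mul_le_mul_of_nonneg_right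
            · exact_mod_cast hg q
            · positivity
        _ = r ^ q * r := one_mul _
  have hsum1 : Summable (fun q : ℕ => r ^ q * r) := hgeom.mul_right r
  have hsum2 : Summable (fun q : ℕ => (if q = q0 then r ^ q0 * r else 0 : ℝ)) :=
    (hasSum_ite_eq q0 (r ^ q0 * r)).summable
  have hsumS : Summable (fun q : ℕ => (g q : ℝ) * ((b : ℝ) ^ (q + 1))⁻¹) := by
    apply Summable.of_nonneg_of_le (fun q => by positivity) (fun q => ?_) hsum1
    rw [hpow q]
    calc (g q : ℝ) * (r ^ q * r) ≤ 1 * (r ^ q * r) := by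
          apply mul_le_mul_of_nonneg_right
          · exact_mod_cast hg q
          · positivity
      _ = r ^ q * r := one_mul _
  have hle := Summable.tsum_le_tsum hSle hsumS (hsum1.sub hsum2)
  have heq : ∑' q : ℕ, (r ^ q * r - (if q = q0 then r ^ q0 * r else 0))
      = (1 - r)⁻¹ * r - r ^ q0 * r := by
    rw [Summable.tsum_sub hsum1 hsum2, tsum_mul_right, tsum_geometric_of_lt_one hrpos.le hr1,
      tsum_ite_eq]
  rw [heq] at hle
  have h1r : 0 < 1 - r := by linarith
  have hle1 : (1 - r)⁻¹ * r ≤ 1 := by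
    rw [inv_mul_le_iff₀ h1r]
    linarith
  have hpos : 0 < r ^ q0 * r := by positivity
  linarith

lemma hasSum_cfun {b : ℕ} (hb : 2 ≤ b) :
    HasSum (fun p => (cfun p : ℝ) * ((b : ℝ) ^ p)⁻¹)
      (∑' i : ℕ, (∑ j ∈ Finset.range (2 ^ (2 * i)), ((b : ℝ) ^ j)⁻¹)
        * ((b : ℝ) ^ (2 ^ (2 * i)))⁻¹) := by
  have hb2 : (2:ℝ) ≤ (b : ℝ) := by exact_mod_cast hb
  have hb0 : (0:ℝ) < b := by linarith
  set f : ℕ → ℝ := fun p => (cfun p : ℝ) * ((b : ℝ) ^ p)⁻¹ with hf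
  set e : (Σ i : ℕ, Fin (4 ^ i)) → ℕ := fun x => 4 ^ x.1 + (x.2 : ℕ) with he
  have hmem : ∀ p, p ∈ Set.range e ↔ ∃ i, 4 ^ i ≤ p ∧ p < 2 * 4 ^ i := by
    intro p
    constructor
    · rintro ⟨⟨i, j⟩, rfl⟩
      have hj := j.isLt
      exact ⟨i, Nat.le_add_right _ _, by simp [he]; omega⟩
    · rintro ⟨i, h1, h2⟩
      exact ⟨⟨i, ⟨p - 4 ^ i, by omega⟩⟩, by simp [he]; omega⟩
  have hinj : Function.Injective e := by
    rintro ⟨i, j⟩ ⟨i', j'⟩ h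
    simp only [he] at h
    have hj := j.isLt
    have hj' := j'.isLt
    have hii : i = i' := by
      rcases lt_trichotomy i i' with hlt | heq | hgt
      · exfalso
        have h1 : (4:ℕ) ^ (i + 1) ≤ 4 ^ i' := Nat.pow_le_pow_right (by norm_num) hlt
        have h2 : (4:ℕ) ^ (i + 1) = 4 ^ i * 4 := pow_succ 4 i
        omega
      · exact heq
      · exfalso
        have h1 : (4:ℕ) ^ (i' + 1) ≤ 4 ^ i := Nat.pow_le_pow_right (by norm_num) hgt
        have h2 : (4:ℕ) ^ (i' + 1) = 4 ^ i' * 4 := pow_succ 4 i'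
        omega
    subst hii
    have : (j : ℕ) = (j' : ℕ) := by omega
    exact congrArg (Sigma.mk i) (Fin.ext this)
  have hzero : ∀ p ∉ Set.range e, f p = 0 := by
    intro p hp
    have hc : cfun p = 0 := by
      unfold cfun
      rw [if_neg]
      rw [← hmem]
      exact hp
    simp [hf, hc]
  have hsf : Summable f := summable_aux hb
  have hse : Summable (f ∘ e) := (hinj.summable_iff hzero).mpr hsf
  have hfiber : ∀ i : ℕ, HasSum (fun j : Fin (4 ^ i) => (f ∘ e) ⟨i, j⟩)
      ((∑ j ∈ Finset.range (2 ^ (2 * i)), ((b : ℝ) ^ j)⁻¹) * ((b : ℝ) ^ (2 ^ (2 * i)))⁻¹) := by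
    intro i
    have h4 : (2:ℕ) ^ (2 * i) = 4 ^ i := by rw [pow_mul]; norm_num
    have hsum_eq : (∑ j ∈ Finset.range (2 ^ (2 * i)), ((b : ℝ) ^ j)⁻¹)
        * ((b : ℝ) ^ (2 ^ (2 * i)))⁻¹ = ∑ j ∈ Finset.range (4 ^ i), f (4 ^ i + j) := by
      rw [h4, Finset.sum_mul]
      apply Finset.sum_congr rfl
      intro j hj
      rw [Finset.mem_range] at hj
      have hc : cfun (4 ^ i + j) = 1 := cfun_eq_one (Nat.le_add_right _ _) (by omega)
      show ((b : ℝ) ^ j)⁻¹ * ((b : ℝ) ^ (4 ^ i))⁻¹ = (cfun (4 ^ i + j) : ℝ) * ((b : ℝ) ^ (4 ^ i + j))⁻¹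
      rw [hc, pow_add, mul_inv]
      push_cast
      ring
    rw [hsum_eq, ← Fin.sum_univ_eq_sum_range (fun j => f (4 ^ i + j)) (4 ^ i)]
    exact hasSum_fintype _
  have h1 : HasSum (f ∘ e) (∑' x, (f ∘ e) x) := hse.hasSum
  have h2 := h1.sigma hfiber
  have h3 := h2.tsum_eq
  rw [← h3] at h1
  exact (hinj.hasSum_iff hzero).mp h1

lemma digit_eq {b : ℕ} (hb : 2 ≤ b) {ω : ℝ}
    (hω : HasSum (fun p => (cfun p : ℝ) * ((b : ℝ) ^ p)⁻¹) ω) (m : ℕ) :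
    digitSeq b ω m = cfun (m + 1) := by
  have hb2 : (2:ℝ) ≤ (b : ℝ) := by exact_mod_cast hb
  have hb0 : (0:ℝ) < b := by linarith
  set f : ℕ → ℝ := fun p => (cfun p : ℝ) * ((b : ℝ) ^ p)⁻¹ with hf
  have hfs : Summable f := summable_aux hb
  have hωeq : ω = ∑' p, f p := hω.tsum_eq.symm
  -- tail is in [0, 1)
  have hq0 : cfun ((2 * 4 ^ (m + 2) - (m + 2)) + (m + 2)) = 0 := by
    have h1 : m + 2 < 4 ^ (m + 2) := Nat.lt_pow_self (by norm_num)
    have h2 : (2 * 4 ^ (m + 2) - (m + 2)) + (m + 2) = 2 * 4 ^ (m + 2) := by omega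
    rw [h2]
    exact cfun_eq_zero (le_refl _) (by
      have h3 : (4:ℕ) ^ (m + 3) = 4 ^ (m + 2) * 4 := pow_succ 4 (m + 2)
      omega)
  have htail : ∑' q : ℕ, (cfun (q + (m + 2)) : ℝ) * ((b : ℝ) ^ (q + 1))⁻¹ < 1 :=
    tail_lt_one hb (fun q => cfun (q + (m + 2))) (fun q => cfun_le_one _) _ hq0
  have htail0 : 0 ≤ ∑' q : ℕ, (cfun (q + (m + 2)) : ℝ) * ((b : ℝ) ^ (q + 1))⁻¹ :=
    tsum_nonneg (fun q => by positivity)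
  have hsplit := Summable.sum_add_tsum_nat_add (f := f) (m + 2) hfs
  set T : ℕ := ∑ p ∈ Finset.range (m + 2), cfun p * b ^ (m + 1 - p) with hT
  have hA : (∑ p ∈ Finset.range (m + 2), f p) * (b : ℝ) ^ (m + 1) = (T : ℝ) := by
    rw [Finset.sum_mul, hT]
    push_cast
    apply Finset.sum_congr rfl
    intro p hp
    rw [Finset.mem_range] at hp
    have hpow : (b : ℝ) ^ (m + 1) = (b : ℝ) ^ p * (b : ℝ) ^ (m + 1 - p) := by
      rw [← pow_add]
      congr 1
      omega
    show (cfun p : ℝ) * ((b : ℝ) ^ p)⁻¹ * (b : ℝ) ^ (m + 1) = (cfun p : ℝ) * (b : ℝ) ^ (m + 1 - p)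
    rw [hpow]
    have hne : (b : ℝ) ^ p ≠ 0 := by positivity
    field_simp
  have hR : (∑' q, f (q + (m + 2))) * (b : ℝ) ^ (m + 1)
      = ∑' q : ℕ, (cfun (q + (m + 2)) : ℝ) * ((b : ℝ) ^ (q + 1))⁻¹ := by
    rw [← tsum_mul_right]
    apply tsum_congr
    intro q
    have hpow : (b : ℝ) ^ (q + (m + 2)) = (b : ℝ) ^ (q + 1) * (b : ℝ) ^ (m + 1) := by
      rw [← pow_add]
      congr 1
      omega
    show (cfun (q + (m + 2)) : ℝ) * ((b : ℝ) ^ (q + (m + 2)))⁻¹ * (b : ℝ) ^ (m + 1) = _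
    rw [hpow, mul_inv]
    have hne : (b : ℝ) ^ (m + 1) ≠ 0 := by positivity
    field_simp
  have hfloor : ⌊ω * (b : ℝ) ^ (m + 1)⌋ = (T : ℤ) := by
    rw [hωeq, ← hsplit, add_mul, hA, hR, Int.floor_eq_iff]
    push_cast
    constructor <;> linarith
  have hmod : T % b = cfun (m + 1) := by
    have hTe : T = b * (∑ p ∈ Finset.range (m + 1), cfun p * b ^ (m - p)) + cfun (m + 1) := by
      rw [hT, Finset.sum_range_succ, Nat.sub_self, pow_zero, mul_one, Finset.mul_sum]
      congr 1
      apply Finset.sum_congr rfl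
      intro p hp
      rw [Finset.mem_range] at hp
      have h1 : m + 1 - p = (m - p) + 1 := by omega
      rw [h1, pow_succ]
      ring
    rw [hTe, Nat.mul_add_mod]
    exact Nat.mod_eq_of_lt (by have := cfun_le_one (m + 1); omega)
  rw [digitSeq, hfloor, ← Int.natCast_mod, Int.toNat_natCast, hmod]

lemma Ico_disj {x y : ℕ} (h : x < y) :
    Disjoint (Finset.Ico (4 ^ x - 1) (2 * 4 ^ x - 1)) (Finset.Ico (4 ^ y - 1) (2 * 4 ^ y - 1)) := by
  rw [Finset.disjoint_left]
  intro a ha ha'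
  rw [Finset.mem_Ico] at ha ha'
  have h1 : (4:ℕ) ^ (x + 1) ≤ 4 ^ y := Nat.pow_le_pow_right (by norm_num) h
  have h2 : (4:ℕ) ^ (x + 1) = 4 ^ x * 4 := pow_succ 4 x
  have h3 : 1 ≤ (4:ℕ) ^ x := Nat.one_le_pow _ _ (by norm_num)
  omega

lemma Icc_disj (n : ℕ) {x y : ℕ} (h : x < y) :
    Disjoint (Finset.Icc (2 * 4 ^ x - 1) (4 ^ (x + 1) - 1 - n))
      (Finset.Icc (2 * 4 ^ y - 1) (4 ^ (y + 1) - 1 - n)) := by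
  rw [Finset.disjoint_left]
  intro a ha ha'
  rw [Finset.mem_Icc] at ha ha'
  have h1 : (4:ℕ) ^ (x + 1) ≤ 4 ^ y := Nat.pow_le_pow_right (by norm_num) h
  have h3 : 1 ≤ (4:ℕ) ^ y := Nat.one_le_pow _ _ (by norm_num)
  omega

lemma O_eq (k : ℕ) : (Finset.range (2 * 4 ^ k)).filter (fun i => cfun (i + 1) = 1)
    = (Finset.range (k + 1)).biUnion (fun j => Finset.Ico (4 ^ j - 1) (2 * 4 ^ j - 1)) := by
  ext i
  simp only [Finset.mem_filter, Finset.mem_range, Finset.mem_biUnion, Finset.mem_Ico]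
  constructor
  · rintro ⟨him, hc⟩
    obtain ⟨l, h1, h2⟩ := cfun_eq_one_elim hc
    have hlk : l < k + 1 := by
      by_contra hcon
      have hle : (4:ℕ) ^ (k + 1) ≤ 4 ^ l := Nat.pow_le_pow_right (by norm_num) (by omega)
      have h4 : (4:ℕ) ^ (k + 1) = 4 ^ k * 4 := pow_succ 4 k
      omega
    exact ⟨l, hlk, by omega, by omega⟩
  · rintro ⟨j, hj, h1, h2⟩
    have h3 : 1 ≤ (4:ℕ) ^ j := Nat.one_le_pow _ _ (by norm_num)
    have h4 : (4:ℕ) ^ j ≤ 4 ^ k := Nat.pow_le_pow_right (by norm_num) (by omega)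
    exact ⟨by omega, cfun_eq_one (p := i + 1) (j := j) (by omega) (by omega)⟩

lemma card_upper (n k : ℕ) (hn : 1 ≤ n) :
    (((Finset.range (2 * 4 ^ k)).filter fun i =>
        i + n ≤ 2 * 4 ^ k ∧ ∀ j ∈ Finset.range n, cfun (i + j + 1) = 0).card)
      + ∑ j ∈ Finset.range (k + 1), 4 ^ j ≤ 2 * 4 ^ k := by
  classical
  set O := (Finset.range (2 * 4 ^ k)).filter (fun i => cfun (i + 1) = 1) with hO
  have hsub : ((Finset.range (2 * 4 ^ k)).filter fun i =>
      i + n ≤ 2 * 4 ^ k ∧ ∀ j ∈ Finset.range n, cfun (i + j + 1) = 0)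
      ⊆ Finset.range (2 * 4 ^ k) \ O := by
    intro i hi
    rw [Finset.mem_filter] at hi
    obtain ⟨hir, hle, hz⟩ := hi
    rw [Finset.mem_sdiff]
    refine ⟨hir, ?_⟩
    intro hiO
    rw [hO, Finset.mem_filter] at hiO
    have h0 := hz 0 (Finset.mem_range.mpr hn)
    simp only [Nat.add_zero] at h0
    omega
  have hOsub : O ⊆ Finset.range (2 * 4 ^ k) := Finset.filter_subset _ _
  have hOcard : O.card = ∑ j ∈ Finset.range (k + 1), 4 ^ j := by
    rw [hO, O_eq k, Finset.card_biUnion]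
    · apply Finset.sum_congr rfl
      intro j _
      rw [Nat.card_Ico]
      have h3 : 1 ≤ (4:ℕ) ^ j := Nat.one_le_pow _ _ (by norm_num)
      omega
    · intro x _ y _ hxy
      rcases lt_or_gt_of_ne hxy with h | h
      · exact Ico_disj h
      · exact (Ico_disj h).symm
  have hc1 := Finset.card_le_card hsub
  rw [Finset.card_sdiff_of_subset hOsub, Finset.card_range] at hc1
  have hc2 := Finset.card_le_card hOsub
  rw [Finset.card_range] at hc2
  omega

lemma card_lower (n k : ℕ) (hn : 1 ≤ n) :
    2 * ((4:ℝ) ^ (k + 1) - 1) / 3 - ((k : ℝ) + 1) * n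
      ≤ (((Finset.range (4 ^ (k + 1))).filter fun i =>
          i + n ≤ 4 ^ (k + 1) ∧ ∀ j ∈ Finset.range n, cfun (i + j + 1) = 0).card : ℝ) := by
  classical
  set G := (Finset.range (k + 1)).biUnion
      (fun j => Finset.Icc (2 * 4 ^ j - 1) (4 ^ (j + 1) - 1 - n)) with hG
  have hGsub : G ⊆ ((Finset.range (4 ^ (k + 1))).filter fun i =>
      i + n ≤ 4 ^ (k + 1) ∧ ∀ j ∈ Finset.range n, cfun (i + j + 1) = 0) := by
    intro i hi
    rw [hG, Finset.mem_biUnion] at hi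
    obtain ⟨j, hjk, hIcc⟩ := hi
    rw [Finset.mem_range] at hjk
    rw [Finset.mem_Icc] at hIcc
    have hP : 1 ≤ (4:ℕ) ^ j := Nat.one_le_pow _ _ (by norm_num)
    have h4 : (4:ℕ) ^ (j + 1) = 4 ^ j * 4 := pow_succ 4 j
    have hle : (4:ℕ) ^ (j + 1) ≤ 4 ^ (k + 1) := Nat.pow_le_pow_right (by norm_num) (by omega)
    have hin : i + n ≤ 4 ^ (j + 1) - 1 := by omega
    rw [Finset.mem_filter, Finset.mem_range]
    refine ⟨by omega, by omega, ?_⟩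
    intro j' hj'
    rw [Finset.mem_range] at hj'
    exact cfun_eq_zero (j := j) (by omega) (by omega)
  have hcard : G.card = ∑ j ∈ Finset.range (k + 1),
      (Finset.Icc (2 * 4 ^ j - 1) (4 ^ (j + 1) - 1 - n)).card := by
    rw [hG]
    apply Finset.card_biUnion
    intro x _ y _ hxy
    rcases lt_or_gt_of_ne hxy with h | h
    · exact Icc_disj n h
    · exact (Icc_disj n h).symm
  have hjcard : ∀ j, 2 * (4:ℝ) ^ j - n
      ≤ ((Finset.Icc (2 * 4 ^ j - 1) (4 ^ (j + 1) - 1 - n)).card : ℝ) := by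
    intro j
    have hc := Nat.card_Icc (2 * 4 ^ j - 1) (4 ^ (j + 1) - 1 - n)
    have hP : 1 ≤ (4:ℕ) ^ j := Nat.one_le_pow _ _ (by norm_num)
    have h4 : (4:ℕ) ^ (j + 1) = 4 ^ j * 4 := pow_succ 4 j
    have hz : (2 * (4:ℕ) ^ j : ℤ) - (n : ℤ)
        ≤ ((Finset.Icc (2 * 4 ^ j - 1) (4 ^ (j + 1) - 1 - n)).card : ℤ) := by omega
    exact_mod_cast hz
  calc 2 * ((4:ℝ) ^ (k + 1) - 1) / 3 - ((k : ℝ) + 1) * n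
      = ∑ j ∈ Finset.range (k + 1), (2 * (4:ℝ) ^ j - n) := by
        rw [Finset.sum_sub_distrib, ← Finset.mul_sum,
          geom_sum_eq (by norm_num : (4:ℝ) ≠ 1), Finset.sum_const, Finset.card_range]
        push_cast
        ring
    _ ≤ ∑ j ∈ Finset.range (k + 1),
        ((Finset.Icc (2 * 4 ^ j - 1) (4 ^ (j + 1) - 1 - n)).card : ℝ) :=
        Finset.sum_le_sum (fun j _ => hjcard j)
    _ = (G.card : ℝ) := by rw [hcard]; push_cast; ring
    _ ≤ _ := by exact_mod_cast Finset.card_le_card hGsub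

theorem not_borel_example (b : ℕ) (hb : 2 ≤ b)
    (ω : ℝ)
    (hωdef : ω = ∑' i : ℕ,
      (∑ j ∈ Finset.range (2 ^ (2 * i)), ((b : ℝ) ^ j)⁻¹) * ((b : ℝ) ^ (2 ^ (2 * i)))⁻¹) :
    (∀ n : ℕ, 1 ≤ n →
      ¬ ∃ ε : ℝ, HasStrDensity (digitSeq b (Int.fract ω)) (List.replicate n 0) ε) ∧
      ¬ IsBorel b (Int.fract ω) := by
  have hb2 : (2:ℝ) ≤ (b : ℝ) := by exact_mod_cast hb
  have hb0 : (0:ℝ) < b := by linarith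
  have hsum : HasSum (fun p => (cfun p : ℝ) * ((b : ℝ) ^ p)⁻¹) ω := by
    rw [hωdef]; exact hasSum_cfun hb
  have hfs := summable_aux hb
  have hω0 : 0 ≤ ω := by
    rw [← hsum.tsum_eq]
    exact tsum_nonneg (fun p => by positivity)
  have hω1 : ω < 1 := by
    have hsplit := Summable.sum_add_tsum_nat_add (f := fun p => (cfun p : ℝ) * ((b : ℝ) ^ p)⁻¹) 1 hfs
    have h0 : ∑ p ∈ Finset.range 1, (cfun p : ℝ) * ((b : ℝ) ^ p)⁻¹ = 0 := by
      simp [cfun_zero]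
    have htail : ∑' q : ℕ, (cfun (q + 1) : ℝ) * ((b : ℝ) ^ (q + 1))⁻¹ < 1 :=
      tail_lt_one hb (fun q => cfun (q + 1)) (fun q => cfun_le_one _) 1
        (cfun_eq_zero (j := 0) (by norm_num) (by norm_num))
    rw [← hsum.tsum_eq, ← hsplit, h0, zero_add]
    exact htail
  have hfr : Int.fract ω = ω := Int.fract_eq_self.mpr ⟨hω0, hω1⟩
  have hd : ∀ i, digitSeq b (Int.fract ω) i = cfun (i + 1) := by
    rw [hfr]; exact digit_eq hb hsum
  have main : ∀ n : ℕ, 1 ≤ n →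
      ¬ ∃ ε : ℝ, HasStrDensity (digitSeq b (Int.fract ω)) (List.replicate n 0) ε := by
    intro n hn hex
    obtain ⟨ε, hε⟩ := hex
    rw [HasStrDensity] at hε
    have hgd : ∀ j, (List.replicate n (0:ℕ)).getD j 0 = 0 := fun j => by simp [List.getD]
    have hsetEq : ∀ m : ℕ, ((Finset.range m).filter fun i =>
        i + (List.replicate n (0:ℕ)).length ≤ m ∧
          ∀ j ∈ Finset.range (List.replicate n (0:ℕ)).length,
            digitSeq b (Int.fract ω) (i + j) = (List.replicate n (0:ℕ)).getD j 0)
        = ((Finset.range m).filter fun i =>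
            i + n ≤ m ∧ ∀ j ∈ Finset.range n, cfun (i + j + 1) = 0) := by
      intro m
      apply Finset.filter_congr
      intro i _
      simp only [List.length_replicate, hd, hgd]
    simp only [hsetEq] at hε
    -- subsequence 1 : m = 2 * 4 ^ k, density ≤ 1/3
    have hmono1 : StrictMono (fun k : ℕ => 2 * 4 ^ k) := by
      apply strictMono_nat_of_lt_succ
      intro k
      have h4 : (4:ℕ) ^ (k + 1) = 4 ^ k * 4 := pow_succ 4 k
      have hP : 1 ≤ (4:ℕ) ^ k := Nat.one_le_pow _ _ (by norm_num)
      omega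
    have hmono2 : StrictMono (fun k : ℕ => 4 ^ (k + 1)) := by
      apply strictMono_nat_of_lt_succ
      intro k
      have h4 : (4:ℕ) ^ (k + 2) = 4 ^ (k + 1) * 4 := pow_succ 4 (k + 1)
      have hP : 1 ≤ (4:ℕ) ^ (k + 1) := Nat.one_le_pow _ _ (by norm_num)
      omega
    have hs1 := hε.comp hmono1.tendsto_atTop
    have hs2 := hε.comp hmono2.tendsto_atTop
    -- upper bound sequence
    have hub : ∀ k : ℕ, ((((Finset.range (2 * 4 ^ k)).filter fun i =>
        i + n ≤ 2 * 4 ^ k ∧ ∀ j ∈ Finset.range n, cfun (i + j + 1) = 0).card : ℝ)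
          / ((2 * 4 ^ k : ℕ) : ℝ))
        ≤ 1/3 + (1/6) * ((1:ℝ)/4) ^ k := by
      intro k
      have hmpos : (0:ℝ) < ((2 * 4 ^ k : ℕ) : ℝ) := by
        have : 1 ≤ (4:ℕ) ^ k := Nat.one_le_pow _ _ (by norm_num)
        exact_mod_cast by omega
      rw [div_le_iff₀ hmpos]
      have hcu := card_upper n k hn
      have h' : ((((Finset.range (2 * 4 ^ k)).filter fun i =>
          i + n ≤ 2 * 4 ^ k ∧ ∀ j ∈ Finset.range n, cfun (i + j + 1) = 0).card
          + ∑ j ∈ Finset.range (k + 1), 4 ^ j : ℕ) : ℝ) ≤ ((2 * 4 ^ k : ℕ) : ℝ) :=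
        Nat.cast_le.mpr hcu
      push_cast at h' ⊢
      rw [geom_sum_eq (by norm_num : (4:ℝ) ≠ 1)] at h'
      have hq : ((1:ℝ)/4) ^ k * 4 ^ k = 1 := by rw [← mul_pow]; norm_num
      have heq : (1/3 + (1/6) * ((1:ℝ)/4) ^ k) * (2 * 4 ^ k)
          = 2 * (4:ℝ) ^ k - ((4:ℝ) ^ (k + 1) - 1) / (4 - 1) := by
        linear_combination (1/3 : ℝ) * hq
      rw [heq]
      linarith [h']
    -- lower bound sequence
    have hlb : ∀ k : ℕ, 2/3 - (2/3) * ((1:ℝ)/4) ^ (k + 1) - (n:ℝ) * ((k:ℝ)+1) * ((1:ℝ)/4) ^ (k + 1)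
        ≤ ((((Finset.range (4 ^ (k + 1))).filter fun i =>
          i + n ≤ 4 ^ (k + 1) ∧ ∀ j ∈ Finset.range n, cfun (i + j + 1) = 0).card : ℝ)
          / ((4 ^ (k + 1) : ℕ) : ℝ)) := by
      intro k
      have hmpos : (0:ℝ) < ((4 ^ (k + 1) : ℕ) : ℝ) := by
        have : 1 ≤ (4:ℕ) ^ (k + 1) := Nat.one_le_pow _ _ (by norm_num)
        exact_mod_cast by omega
      rw [le_div_iff₀ hmpos]
      have hcl := card_lower n k hn
      have hq : ((1:ℝ)/4) ^ (k + 1) * 4 ^ (k + 1) = 1 := by rw [← mul_pow]; norm_num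
      push_cast
      have heq : (2/3 - (2/3) * ((1:ℝ)/4) ^ (k + 1) - (n:ℝ) * ((k:ℝ)+1) * ((1:ℝ)/4) ^ (k + 1))
          * (4:ℝ) ^ (k + 1) = 2 * ((4:ℝ) ^ (k + 1) - 1) / 3 - ((k:ℝ) + 1) * (n:ℝ) := by
        linear_combination (-(2/3 : ℝ) - (n:ℝ) * ((k:ℝ)+1)) * hq
      rw [heq]
      exact hcl
    -- limits of the bound sequences
    have hpow14 : Tendsto (fun k : ℕ => ((1:ℝ)/4) ^ k) atTop (nhds 0) :=
      tendsto_pow_atTop_nhds_zero_of_lt_one (by norm_num) (by norm_num)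
    have hu : Tendsto (fun k : ℕ => 1/3 + (1/6) * ((1:ℝ)/4) ^ k) atTop (nhds (1/3)) := by
      have := (hpow14.const_mul (1/6 : ℝ)).const_add (1/3 : ℝ)
      simpa using this
    have hpow14' : Tendsto (fun k : ℕ => ((1:ℝ)/4) ^ (k + 1)) atTop (nhds 0) :=
      hpow14.comp (tendsto_add_atTop_nat 1)
    have hpow12' : Tendsto (fun k : ℕ => ((1:ℝ)/2) ^ (k + 1)) atTop (nhds 0) :=
      (tendsto_pow_atTop_nhds_zero_of_lt_one (by norm_num) (by norm_num)).comp
        (tendsto_add_atTop_nat 1)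
    have hterm : Tendsto (fun k : ℕ => (n:ℝ) * ((k:ℝ)+1) * ((1:ℝ)/4) ^ (k + 1)) atTop (nhds 0) := by
      apply squeeze_zero (g := fun k : ℕ => (n:ℝ) * ((1:ℝ)/2) ^ (k + 1))
        (fun k => by positivity) (fun k => ?_)
      · have := hpow12'.const_mul (n:ℝ)
        simpa using this
      · have hk2 : ((k:ℝ)+1) ≤ 2 ^ (k + 1) := by
          exact_mod_cast (Nat.lt_two_pow_self (n := k + 1)).le
        have h2q : (2:ℝ) ^ (k + 1) * ((1:ℝ)/2) ^ (k + 1) = 1 := by rw [← mul_pow]; norm_num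
        calc (n:ℝ) * ((k:ℝ)+1) * ((1:ℝ)/4) ^ (k + 1)
            ≤ (n:ℝ) * (2:ℝ) ^ (k + 1) * ((1:ℝ)/4) ^ (k + 1) := by
              apply mul_le_mul_of_nonneg_right
                (mul_le_mul_of_nonneg_left hk2 (by positivity)) (by positivity)
          _ = (n:ℝ) * ((1:ℝ)/2) ^ (k + 1) := by
              have hq4 : ((1:ℝ)/4) ^ (k + 1) = ((1:ℝ)/2) ^ (k + 1) * ((1:ℝ)/2) ^ (k + 1) := by
                rw [← mul_pow]; norm_num
              rw [hq4]
              linear_combination (n:ℝ) * ((1:ℝ)/2) ^ (k + 1) * h2q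
    have hl : Tendsto (fun k : ℕ =>
        2/3 - (2/3) * ((1:ℝ)/4) ^ (k + 1) - (n:ℝ) * ((k:ℝ)+1) * ((1:ℝ)/4) ^ (k + 1))
        atTop (nhds (2/3)) := by
      have := ((hpow14'.const_mul (2/3 : ℝ)).const_sub (2/3 : ℝ)).sub hterm
      simpa using this
    have h13 : ε ≤ 1/3 := le_of_tendsto_of_tendsto' hs1 hu hub
    have h23 : 2/3 ≤ ε := le_of_tendsto_of_tendsto' hl hs2 hlb
    linarith
  refine ⟨main, fun hB => (main 1 le_rfl) ?_⟩
  apply hB (List.replicate 1 0)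
  intro x hx
  rw [List.mem_replicate] at hx
  omega
end

section
/- Define f(2) = 4 and, for n ≥ 3, f(n) = n^{f(n−1)/(n−1)} (each exponent f(n−1)/(n−1) is a positive integer, so each f(n) is a positive integer). Then the infinite product μ = ∏_{m=2}^∞ (1 − 1/f(m)) converges to a real number in (0,1) that is irrational and absolutely abnormal: for every integer b ≥ 2, μ is not simply normal in base b. -/
open Filter Topology

/-- `ω` is simply normal in base `b`: every digit `h < b` has density `1/b`. -/
def IsSimplyNormal (b : ℕ) (ω : ℝ) : Prop :=
  ∀ h : ℕ, h < b → HasStrDensity (digitSeq b ω) [h] (1 / b)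

/-- Martin's function: `f 2 = 4` and `f n = n ^ (f (n-1) / (n-1))` for `n ≥ 3`. -/
def martinF : ℕ → ℕ
  | 0 => 1
  | 1 => 1
  | 2 => 4
  | n + 3 => (n + 3) ^ (martinF (n + 2) / (n + 2))

namespace MartinAux

open Finset

def eF : ℕ → ℕ
  | 0 => 0
  | 1 => 0
  | 2 => 2
  | n + 3 => martinF (n + 2) / (n + 2)

lemma f_succ (n : ℕ) (h : 2 ≤ n) : martinF (n+1) = (n+1) ^ (martinF n / n) := by
  obtain ⟨m, rfl⟩ := Nat.exists_eq_add_of_le' h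
  rfl

lemma eF_succ_def (n : ℕ) (h : 2 ≤ n) : eF (n+1) = martinF n / n := by
  obtain ⟨m, rfl⟩ := Nat.exists_eq_add_of_le' h
  rfl

lemma f_pow_eF : ∀ n, 2 ≤ n → martinF n = n ^ eF n ∧ 2 ≤ eF n := by
  intro n hn
  induction n, hn using Nat.le_induction with
  | base => exact ⟨rfl, le_refl _⟩
  | succ n hn ih =>
    obtain ⟨hf, he⟩ := ih
    have hdiv : martinF n / n = n ^ (eF n - 1) := by
      rw [hf]
      conv_lhs => rw [show eF n = (eF n - 1) + 1 by omega]
      rw [pow_succ, Nat.mul_div_cancel _ (by omega)]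
    constructor
    · rw [f_succ n hn, eF_succ_def n hn]
    · rw [eF_succ_def n hn, hdiv]
      calc 2 ≤ n := hn
      _ = n ^ 1 := (pow_one n).symm
      _ ≤ n ^ (eF n - 1) := Nat.pow_le_pow_right (by omega) (by omega)

lemma f_pow (n : ℕ) (hn : 2 ≤ n) : martinF n = n ^ eF n := (f_pow_eF n hn).1
lemma eF_ge (n : ℕ) (hn : 2 ≤ n) : 2 ≤ eF n := (f_pow_eF n hn).2

lemma eF_succ (n : ℕ) (hn : 2 ≤ n) : eF (n+1) = n ^ (eF n - 1) := by
  have he := eF_ge n hn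
  rw [eF_succ_def n hn, f_pow n hn]
  conv_lhs => rw [show eF n = (eF n - 1) + 1 by omega]
  rw [pow_succ, Nat.mul_div_cancel _ (by omega)]

lemma f_ge_sq (n : ℕ) (hn : 2 ≤ n) : n ^ 2 ≤ martinF n := by
  rw [f_pow n hn]; exact Nat.pow_le_pow_right (by omega) (eF_ge n hn)

lemma f_ge_four (n : ℕ) (hn : 2 ≤ n) : 4 ≤ martinF n :=
  le_trans (by nlinarith) (f_ge_sq n hn)

lemma f_pos (n : ℕ) : 0 < martinF n := by
  match n with
  | 0 => decide
  | 1 => decide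
  | 2 => decide
  | n + 3 => exact Nat.pow_pos (by omega)

lemma dvd_f (n : ℕ) (hn : 2 ≤ n) : n ∣ martinF n := by
  rw [f_pow n hn]; exact dvd_pow_self n (by have := eF_ge n hn; omega)

lemma pow_cong (n : ℕ) : ∀ j : ℕ, ((n:ℤ))^(j+1) ∣ ((n:ℤ)+1)^(n^j) - 1 := by
  intro j
  induction j with
  | zero =>
    simp only [zero_add, pow_one, pow_zero]
    have h2 : ((n:ℤ)+1) - 1 ∣ ((n:ℤ)+1)^n - 1^n := sub_dvd_pow_sub_pow _ _ _
    simpa using h2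
  | succ j ih =>
    set a : ℤ := ((n:ℤ)+1)^(n^j) with ha
    obtain ⟨c, hc⟩ := ih
    have key : ((n:ℤ)+1)^(n^(j+1)) = a ^ n := by
      rw [ha, ← pow_mul, pow_succ]
    rw [key]
    have geom : a ^ n - 1 = (∑ i ∈ range n, a ^ i) * (a - 1) := by
      have := geom_sum_mul a n; linarith [this]
    rw [geom]
    have hsum : (n:ℤ) ∣ (∑ i ∈ range n, a ^ i) - n := by
      have : (∑ i ∈ range n, a ^ i) - n = ∑ i ∈ range n, (a ^ i - 1) := by
        rw [Finset.sum_sub_distrib]; simp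
      rw [this]
      apply Finset.dvd_sum
      intro i _
      have h1 : ((n:ℤ)) ∣ a - 1 := by
        rw [hc]; exact Dvd.dvd.mul_right (dvd_pow_self _ (by omega)) c
      calc ((n:ℤ)) ∣ a - 1 := h1
      _ ∣ a ^ i - 1 ^ i := sub_dvd_pow_sub_pow _ _ _
      _ = a ^ i - 1 := by ring_nf
    obtain ⟨t, ht⟩ := hsum
    have expand : (∑ i ∈ range n, a ^ i) * (a - 1) = (n:ℤ) * (a-1) + (n:ℤ) * t * (a - 1) := by
      have : (∑ i ∈ range n, a ^ i) = (n:ℤ) + (n:ℤ)*t := by linarith [ht]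
      rw [this]; ring
    rw [expand]
    apply dvd_add
    · rw [hc]
      exact ⟨c, by ring⟩
    · have : ((n:ℤ))^(j+1+1) = (n:ℤ) * (n:ℤ)^(j+1) := by ring
      rw [this, hc]
      exact ⟨t * c, by ring⟩

/-- key: f n ∣ f (n+1) - 1 (in ℤ) -/
lemma f_dvd_int (n : ℕ) (hn : 2 ≤ n) :
    ((martinF n : ℤ)) ∣ (martinF (n+1) : ℤ) - 1 := by
  have he := eF_ge n hn
  have h1 : martinF (n+1) = (n+1) ^ (n ^ (eF n - 1)) := by
    rw [f_succ n hn, f_pow n hn]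
    conv_lhs => rw [show eF n = (eF n - 1) + 1 by omega]
    rw [pow_succ, Nat.mul_div_cancel _ (by omega)]
  have h2 : (martinF n : ℤ) = (n:ℤ) ^ ((eF n - 1) + 1) := by
    rw [f_pow n hn]; push_cast; rw [show eF n - 1 + 1 = eF n by omega]
  rw [h1, h2]
  have := pow_cong n (eF n - 1)
  push_cast
  convert this using 2

/-- key: f n ∣ f (n+1) - 1 (in ℕ) -/
lemma f_dvd (n : ℕ) (hn : 2 ≤ n) : martinF n ∣ martinF (n+1) - 1 := by
  have := f_dvd_int n hn
  have h1 : ((martinF (n+1) - 1 : ℕ) : ℤ) = (martinF (n+1) : ℤ) - 1 := by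
    have := f_pos (n+1); push_cast [Nat.cast_sub (by omega : 1 ≤ martinF (n+1))]; ring
  exact_mod_cast h1 ▸ this

lemma two_pow_ge (e : ℕ) (he : 3 ≤ e) : e + 1 ≤ 2 ^ (e - 1) := by
  induction e with
  | zero => omega
  | succ e ih =>
    rcases Nat.lt_or_ge e 3 with h | h
    · interval_cases e <;> simp_all <;> omega
    · have := ih (by omega)
      have h2 : 2 ^ (e - 1) * 2 = 2 ^ (e + 1 - 1) := by
        rw [← pow_succ]; congr 1; omega
      omega

lemma two_pow_ge' (e : ℕ) (he : 6 ≤ e) : 3 * e + 2 ≤ 2 ^ (e - 1) := by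
  induction e with
  | zero => omega
  | succ e ih =>
    rcases Nat.lt_or_ge e 6 with h | h
    · interval_cases e <;> simp_all <;> omega
    · have := ih (by omega)
      have h2 : 2 ^ (e - 1) * 2 = 2 ^ (e + 1 - 1) := by
        rw [← pow_succ]; congr 1; omega
      omega

/-- generic: 2 * n^e ≤ (n+1)^E when e+1 ≤ E -/
lemma generic_growth (n e E : ℕ) (hn : 2 ≤ n) (hE : e + 1 ≤ E) :
    2 * n ^ e ≤ (n+1) ^ E := by
  calc 2 * n ^ e ≤ 2 * (n+1) ^ e := by
        have := Nat.pow_le_pow_left (show n ≤ n+1 by omega) e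
        omega
  _ ≤ (n+1) * (n+1) ^ e := by
        have : 0 < (n+1)^e := Nat.pow_pos (by omega)
        nlinarith
  _ = (n+1) ^ (e+1) := by rw [pow_succ]; ring
  _ ≤ (n+1) ^ E := Nat.pow_le_pow_right (by omega) hE

/-- 2 * f n ≤ f (n+1) for n ≥ 2 -/
lemma two_f_le (n : ℕ) (hn : 2 ≤ n) : 2 * martinF n ≤ martinF (n+1) := by
  rcases Nat.lt_or_ge n 3 with h3 | h3
  · have hn2 : n = 2 := by omega
    subst hn2; decide
  have he := eF_ge n hn
  have h1 : martinF (n+1) = (n+1) ^ (eF (n+1)) := f_pow (n+1) (by omega)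
  have h2 : eF (n+1) = n ^ (eF n - 1) := eF_succ n hn
  have hf : martinF n = n ^ eF n := f_pow n hn
  have key : eF n + 1 ≤ n ^ (eF n - 1) := by
    rcases Nat.lt_or_ge (eF n) 3 with h | h
    · have he2 : eF n = 2 := by omega
      simpa [he2] using h3
    · calc eF n + 1 ≤ 2 ^ (eF n - 1) := two_pow_ge _ h
      _ ≤ n ^ (eF n - 1) := Nat.pow_le_pow_left (by omega) _
  rw [h1, h2, hf]
  exact generic_growth n (eF n) _ hn key

lemma eF_ge16 (n : ℕ) (hn : 5 ≤ n) : 16 ≤ eF n := by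
  induction n, hn using Nat.le_induction with
  | base => decide
  | succ n hn ih =>
    rw [eF_succ n (by omega)]
    calc 16 = 2 ^ 4 := by norm_num
    _ ≤ 2 ^ (eF n - 1) := Nat.pow_le_pow_right (by omega) (by omega)
    _ ≤ n ^ (eF n - 1) := Nat.pow_le_pow_left (by omega) _

/-- 2 * f n ^ 3 ≤ f (n+1) for n ≥ 5 -/
lemma two_f_cube_le (n : ℕ) (hn : 5 ≤ n) : 2 * martinF n ^ 3 ≤ martinF (n+1) := by
  have he := eF_ge16 n hn
  have h1 : martinF (n+1) = (n+1) ^ (eF (n+1)) := f_pow (n+1) (by omega)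
  have h2 : eF (n+1) = n ^ (eF n - 1) := eF_succ n (by omega)
  have hf : martinF n = n ^ eF n := f_pow n (by omega)
  have key : 3 * eF n + 2 ≤ n ^ (eF n - 1) :=
    calc 3 * eF n + 2 ≤ 2 ^ (eF n - 1) := two_pow_ge' _ (by omega)
    _ ≤ n ^ (eF n - 1) := Nat.pow_le_pow_left (by omega) _
  rw [h1, h2, hf, ← pow_mul]
  exact generic_growth n (eF n * 3) _ (by omega) (by omega)

noncomputable def P (M : ℕ) : ℝ := ∏ m ∈ Icc 2 M, (1 - 1/(martinF m:ℝ))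

lemma f_cast_ge (m : ℕ) (hm : 2 ≤ m) : (4:ℝ) ≤ (martinF m : ℝ) := by
  exact_mod_cast f_ge_four m hm

lemma f_cast_pos (m : ℕ) : (0:ℝ) < (martinF m : ℝ) := by exact_mod_cast f_pos m

lemma factor_pos (m : ℕ) (hm : 2 ≤ m) : (0:ℝ) < 1 - 1/(martinF m:ℝ) := by
  have h4 := f_cast_ge m hm
  have : 1/(martinF m:ℝ) ≤ 1/4 := by
    apply one_div_le_one_div_of_le <;> linarith
  linarith

lemma factor_le_one (m : ℕ) : (1:ℝ) - 1/(martinF m:ℝ) ≤ 1 := by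
  have := f_cast_pos m
  have : 0 < 1/(martinF m:ℝ) := by positivity
  linarith

lemma factor_lt_one (m : ℕ) : (1:ℝ) - 1/(martinF m:ℝ) < 1 := by
  have := f_cast_pos m
  have : 0 < 1/(martinF m:ℝ) := by positivity
  linarith

lemma P_pos (M : ℕ) : 0 < P M := by
  apply Finset.prod_pos
  intro m hm
  exact factor_pos m (Finset.mem_Icc.mp hm).1

lemma P_le_one (M : ℕ) : P M ≤ 1 := by
  apply Finset.prod_le_one
  · intro m hm; exact (factor_pos m (Finset.mem_Icc.mp hm).1).le
  · intro m _; exact factor_le_one m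

lemma P_succ (M : ℕ) (h : 1 ≤ M) : P (M+1) = P M * (1 - 1/(martinF (M+1):ℝ)) := by
  unfold P
  rw [Finset.prod_Icc_succ_top (by omega : 2 ≤ M + 1)]

lemma P_anti : Antitone P := by
  apply antitone_nat_of_succ_le
  intro M
  rcases Nat.eq_zero_or_pos M with h | h
  · subst h; simp [P]
  · rw [P_succ M h]
    calc P M * (1 - 1/(martinF (M+1):ℝ)) ≤ P M * 1 :=
      mul_le_mul_of_nonneg_left (factor_le_one _) (P_pos M).le
    _ = P M := mul_one _

lemma P_lb (M : ℕ) (hM : 2 ≤ M) : ((M:ℝ)+1)/(2*M) ≤ P M := by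
  induction M, hM using Nat.le_induction with
  | base =>
    have : P 2 = 1 - 1/(martinF 2 : ℝ) := by simp [P, Finset.Icc_self]
    rw [this]
    norm_num [show martinF 2 = 4 from rfl]
  | succ M hM ih =>
    have hx : (2:ℝ) ≤ (M:ℝ) := by exact_mod_cast hM
    have hsq : ((M:ℝ)+1)^2 ≤ (martinF (M+1) : ℝ) := by
      have := f_ge_sq (M+1) (by omega)
      push_cast at this ⊢
      exact_mod_cast this
    have hfpos := f_cast_pos (M+1)
    have h2 : 1 - 1/(((M:ℝ)+1)^2) ≤ 1 - 1/(martinF (M+1):ℝ) := by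
      have : 1/(martinF (M+1):ℝ) ≤ 1/(((M:ℝ)+1)^2) := by
        apply one_div_le_one_div_of_le
        · positivity
        · exact hsq
      linarith
    have hPM := P_succ M (by omega)
    have hfac : (0:ℝ) ≤ 1 - 1/(((M:ℝ)+1)^2) := by
      have : 1/(((M:ℝ)+1)^2) ≤ 1/4 := by
        apply one_div_le_one_div_of_le
        · norm_num
        · nlinarith
      linarith
    have step : ((M:ℝ)+1)/(2*M) * (1 - 1/(((M:ℝ)+1)^2)) ≤ P (M+1) := by
      rw [hPM]
      apply mul_le_mul ih h2 hfac (P_pos M).le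
    have eqn : ((M:ℝ)+1)/(2*M) * (1 - 1/(((M:ℝ)+1)^2)) = ((M:ℝ)+2)/(2*(M+1)) := by
      field_simp
      ring
    push_cast
    calc ((M:ℝ) + 1 + 1) / (2*((M:ℝ)+1)) = ((M:ℝ)+2)/(2*((M:ℝ)+1)) := by ring_nf
    _ = ((M:ℝ)+1)/(2*M) * (1 - 1/(((M:ℝ)+1)^2)) := eqn.symm
    _ ≤ P (M+1) := step

lemma half_lt_P (M : ℕ) : 1/2 < P M := by
  rcases Nat.lt_or_ge M 2 with h | h
  · interval_cases M <;> norm_num [P]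
  · have := P_lb M h
    have hx : (2:ℝ) ≤ (M:ℝ) := by exact_mod_cast h
    have : (1:ℝ)/2 < ((M:ℝ)+1)/(2*M) := by
      rw [div_lt_div_iff₀ (by norm_num) (by linarith)]
      linarith
    linarith

noncomputable def mu : ℝ := ⨅ n, P n

lemma bdd_below_P : BddBelow (Set.range P) := by
  refine ⟨1/2, ?_⟩
  rintro x ⟨n, rfl⟩
  exact (half_lt_P n).le

lemma tendsto_P : Tendsto P atTop (nhds mu) :=
  tendsto_atTop_ciInf P_anti bdd_below_P

lemma mu_ge : 1/2 ≤ mu := le_ciInf fun n => (half_lt_P n).le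

lemma mu_le_P (k : ℕ) : mu ≤ P k := ciInf_le bdd_below_P k

lemma mu_lt_P (k : ℕ) (hk : 1 ≤ k) : mu < P k := by
  calc mu ≤ P (k+1) := mu_le_P (k+1)
  _ = P k * (1 - 1/(martinF (k+1):ℝ)) := P_succ k hk
  _ < P k * 1 := by
      apply mul_lt_mul_of_pos_left (factor_lt_one _) (P_pos k)
  _ = P k := mul_one _

lemma mu_mem : mu ∈ Set.Ioo (0:ℝ) 1 := by
  constructor
  · linarith [mu_ge]
  · have h1 : mu < P 2 := mu_lt_P 2 (by omega)
    have h2 : P 2 = 3/4 := by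
      simp [P, Finset.Icc_self, show martinF 2 = 4 from rfl]
      norm_num
    linarith

/-- the integer numerator -/
def numA : ℕ → ℕ
  | 0 => 1
  | 1 => 1
  | 2 => 3
  | k + 3 => numA (k+2) * ((martinF (k+3) - 1) / martinF (k+2))

lemma numA_succ (k : ℕ) (hk : 2 ≤ k) :
    numA (k+1) = numA k * ((martinF (k+1) - 1) / martinF k) := by
  obtain ⟨m, rfl⟩ := Nat.exists_eq_add_of_le' hk
  rfl

lemma numA_prod (k : ℕ) (hk : 2 ≤ k) : P k = (numA k : ℝ) / (martinF k : ℝ) := by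
  induction k, hk using Nat.le_induction with
  | base =>
    have : P 2 = 1 - 1/(martinF 2 : ℝ) := by simp [P, Finset.Icc_self]
    rw [this]
    norm_num [show martinF 2 = 4 from rfl, show numA 2 = 3 from rfl]
  | succ k hk ih =>
    have hdvd := f_dvd k hk
    have hf1 : 1 ≤ martinF (k+1) := f_pos (k+1)
    have hcast : (((martinF (k+1) - 1) / martinF k : ℕ) : ℝ)
        = ((martinF (k+1) : ℝ) - 1) / (martinF k : ℝ) := by
      rw [Nat.cast_div hdvd (by exact_mod_cast (f_pos k).ne')]
      congr 1
      push_cast [Nat.cast_sub hf1]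
      ring
    rw [P_succ k (by omega), ih, numA_succ k hk]
    push_cast
    rw [hcast]
    have h1 : (martinF k : ℝ) ≠ 0 := (f_cast_pos k).ne'
    have h2 : (martinF (k+1) : ℝ) ≠ 0 := (f_cast_pos (k+1)).ne'
    field_simp
    try ring

lemma tail_prod_bound (k : ℕ) (hk : 2 ≤ k) :
    ∀ M, k + 1 ≤ M →
      1 - ∏ m ∈ Ioc k M, (1 - 1/(martinF m:ℝ)) ≤ 2/(martinF (k+1):ℝ) - 1/(martinF M:ℝ) := by
  intro M hM
  induction M, hM using Nat.le_induction with
  | base =>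
    rw [show Ioc k (k+1) = {k+1} by rw [← Finset.Icc_add_one_left_eq_Ioc, Finset.Icc_self]]
    rw [Finset.prod_singleton]
    have h0 : (0:ℝ) < (martinF (k+1):ℝ) := f_cast_pos (k+1)
    have h2f : (2:ℝ)/(martinF (k+1):ℝ) = 1/(martinF (k+1):ℝ) + 1/(martinF (k+1):ℝ) := by ring
    linarith
  | succ M hM ih =>
    rw [Finset.prod_Ioc_succ_top (by omega : k ≤ M)]
    set Q := ∏ m ∈ Ioc k M, (1 - 1/(martinF m:ℝ)) with hQ
    have hQ1 : Q ≤ 1 := by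
      apply Finset.prod_le_one
      · intro m hm; exact (factor_pos m (by have := (Finset.mem_Ioc.mp hm).1; omega)).le
      · intro m _; exact factor_le_one m
    have hQ0 : 0 ≤ Q := by
      apply Finset.prod_nonneg
      intro m hm; exact (factor_pos m (by have := (Finset.mem_Ioc.mp hm).1; omega)).le
    have hx : (0:ℝ) < 1/(martinF (M+1):ℝ) := one_div_pos.mpr (f_cast_pos (M+1))
    have hgrow : 2 * (martinF M : ℝ) ≤ (martinF (M+1) : ℝ) := by
      exact_mod_cast two_f_le M (by omega)
    have hfM := f_cast_pos M
    have hfM1 := f_cast_pos (M+1)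
    have hkey : 1/(martinF (M+1):ℝ) + 1/(martinF (M+1):ℝ) ≤ 1/(martinF M:ℝ) := by
      rw [← add_div, div_le_div_iff₀ hfM1 hfM]
      linarith
    have expand : 1 - Q * (1 - 1/(martinF (M+1):ℝ)) = (1 - Q) + Q * (1/(martinF (M+1):ℝ)) := by
      ring
    rw [expand]
    have hQx : Q * (1/(martinF (M+1):ℝ)) ≤ 1/(martinF (M+1):ℝ) := by
      nlinarith
    linarith

lemma P_sub_mu (k : ℕ) (hk : 2 ≤ k) : P k - mu ≤ 2/(martinF (k+1):ℝ) := by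
  have hlim : Tendsto (fun M => P k - P M) atTop (nhds (P k - mu)) :=
    (tendsto_const_nhds.sub tendsto_P)
  apply le_of_tendsto hlim
  filter_upwards [eventually_ge_atTop (k+1)] with M hM
  have e1 : Icc 2 M = Ioc 1 M := Finset.Icc_add_one_left_eq_Ioc 1 M
  have e2 : Icc 2 k = Ioc 1 k := Finset.Icc_add_one_left_eq_Ioc 1 k
  have hsplit : P M = P k * ∏ m ∈ Ioc k M, (1 - 1/(martinF m:ℝ)) := by
    unfold P
    rw [e1, e2]
    rw [Finset.prod_Ioc_consecutive _ (by omega : 1 ≤ k) (by omega : k ≤ M)]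
  set Q := ∏ m ∈ Ioc k M, (1 - 1/(martinF m:ℝ)) with hQdef
  have h1 : 1 - Q ≤ 2/(martinF (k+1):ℝ) - 1/(martinF M:ℝ) := tail_prod_bound k hk M hM
  have hQ1 : Q ≤ 1 := by
    apply Finset.prod_le_one
    · intro m hm; exact (factor_pos m (by have := (Finset.mem_Ioc.mp hm).1; omega)).le
    · intro m _; exact factor_le_one m
  have hfM : (0:ℝ) < 1/(martinF M:ℝ) := one_div_pos.mpr (f_cast_pos M)
  have : P k - P M = P k * (1 - Q) := by rw [hsplit]; ring
  rw [this]
  have hP1 := P_le_one k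
  have hP0 := (P_pos k).le
  nlinarith

lemma digit_run (b : ℕ) (hb : 2 ≤ b) (ω : ℝ) (N : ℤ) (r L n : ℕ)
    (hθpos : 0 < (N:ℝ) - ω * (b:ℝ)^r)
    (hθsmall : ((N:ℝ) - ω * (b:ℝ)^r) * (b:ℝ)^L ≤ 1)
    (hn1 : r ≤ n) (hn2 : n < r + L) :
    digitSeq b ω n = b - 1 := by
  have hb0 : (0:ℝ) < (b:ℝ) := by positivity
  have hb1 : (1:ℝ) ≤ (b:ℝ) := by exact_mod_cast (by omega : 1 ≤ b)
  set θ : ℝ := (N:ℝ) - ω * (b:ℝ)^r with hθ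
  set s : ℕ := n + 1 - r with hs
  have hs1 : 1 ≤ s := by omega
  have hsL : s ≤ L := by omega
  have hrs : r + s = n + 1 := by omega
  have hsplit : ω * (b:ℝ)^(n+1) = (N:ℝ) * (b:ℝ)^s - θ * (b:ℝ)^s := by
    have : ω * (b:ℝ)^(n+1) = (ω * (b:ℝ)^r) * (b:ℝ)^s := by
      rw [mul_assoc, ← pow_add, hrs]
    rw [this, hθ]; ring
  have hbs_pos : (0:ℝ) < (b:ℝ)^s := by positivity
  have hmono : (b:ℝ)^s ≤ (b:ℝ)^L := pow_le_pow_right₀ hb1 hsL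
  have hθs_pos : 0 < θ * (b:ℝ)^s := by positivity
  have hθs_le : θ * (b:ℝ)^s ≤ 1 := by
    calc θ * (b:ℝ)^s ≤ θ * (b:ℝ)^L := by nlinarith
    _ ≤ 1 := hθsmall
  have hfloor : ⌊ω * (b:ℝ)^(n+1)⌋ = N * (b:ℤ)^s - 1 := by
    rw [Int.floor_eq_iff]
    constructor
    · push_cast
      rw [hsplit]
      linarith
    · push_cast
      rw [hsplit]
      linarith
  unfold digitSeq
  rw [hfloor]
  have hdecomp : N * (b:ℤ)^s - 1 = ((b:ℤ) - 1) + (b:ℤ) * (N * (b:ℤ)^(s-1) - 1) := by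
    have : (b:ℤ)^s = (b:ℤ) * (b:ℤ)^(s-1) := by
      conv_lhs => rw [show s = 1 + (s-1) by omega]
      rw [pow_add, pow_one]
    rw [this]; ring
  rw [hdecomp, Int.add_mul_emod_self_left]
  have hmod : ((b:ℤ) - 1) % (b:ℤ) = (b:ℤ) - 1 := by
    apply Int.emod_eq_of_lt <;> omega
  rw [hmod]
  omega

lemma not_simply_normal (b : ℕ) (hb : 2 ≤ b) : ¬ IsSimplyNormal b mu := by
  intro H
  have H1 := H (b-1) (by omega)
  unfold HasStrDensity at H1
  -- subsequence data
  set k : ℕ → ℕ := fun j => b^(j+3) with hkdef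
  have hk5 : ∀ j, 5 ≤ k j := by
    intro j
    calc 5 ≤ 2^3 := by norm_num
    _ ≤ 2^(j+3) := Nat.pow_le_pow_right (by omega) (by omega)
    _ ≤ b^(j+3) := Nat.pow_le_pow_left hb _
  set r : ℕ → ℕ := fun j => (j+3) * eF (k j) with hrdef
  have hre : ∀ j, 16 ≤ eF (k j) := fun j => eF_ge16 _ (hk5 j)
  have hr1 : ∀ j, 1 ≤ r j := by
    intro j
    have := hre j
    simp only [hrdef]
    exact Nat.mul_pos (by omega) (by omega)
  have hbr : ∀ j, b ^ (r j) = martinF (k j) := by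
    intro j
    rw [hrdef, f_pow (k j) (by have := hk5 j; omega), hkdef]
    simp only
    rw [← pow_mul]
  -- digit claims
  have hdigits : ∀ j, ∀ n, r j ≤ n → n < 3 * r j → digitSeq b mu n = b - 1 := by
    intro j n hn1 hn2
    have hkj2 : 2 ≤ k j := by have := hk5 j; omega
    have hfkpos := f_cast_pos (k j)
    have hnum : (numA (k j) : ℝ) = P (k j) * (martinF (k j) : ℝ) := by
      rw [numA_prod (k j) hkj2]
      field_simp
    have hbrR : ((b:ℝ))^(r j) = (martinF (k j) : ℝ) := by
      rw [← hbr j]; push_cast; ring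
    have hθpos : 0 < (numA (k j) : ℝ) - mu * (b:ℝ)^(r j) := by
      rw [hbrR, hnum]
      have := mu_lt_P (k j) (by omega)
      nlinarith
    have hθsmall : ((numA (k j) : ℝ) - mu * (b:ℝ)^(r j)) * (b:ℝ)^(2 * r j) ≤ 1 := by
      rw [hbrR, hnum]
      have hsub := P_sub_mu (k j) hkj2
      have hb2r : ((b:ℝ))^(2 * r j) = (martinF (k j) : ℝ)^2 := by
        rw [two_mul, pow_add, hbrR]; ring
      rw [hb2r]
      have hcube : 2 * (martinF (k j) : ℝ)^3 ≤ (martinF (k j + 1) : ℝ) := by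
        exact_mod_cast two_f_cube_le (k j) (hk5 j)
      have hfk1pos := f_cast_pos (k j + 1)
      have key : (P (k j) - mu) * (martinF (k j):ℝ)^3 ≤ 1 := by
        calc (P (k j) - mu) * (martinF (k j):ℝ)^3
            ≤ (2/(martinF (k j + 1):ℝ)) * (martinF (k j):ℝ)^3 :=
              mul_le_mul_of_nonneg_right hsub (by positivity)
        _ ≤ 1 := by
            rw [div_mul_eq_mul_div, div_le_one hfk1pos]
            linarith
      calc (P (k j) * (martinF (k j):ℝ) - mu * (martinF (k j):ℝ)) * (martinF (k j):ℝ)^2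
          = (P (k j) - mu) * (martinF (k j):ℝ)^3 := by ring
      _ ≤ 1 := key
    exact digit_run b hb mu (numA (k j)) (r j) (2 * r j) n hθpos hθsmall hn1 (by omega)
  -- count bound
  have hcount : ∀ j, 2 * r j ≤ ((Finset.range (3 * r j)).filter fun i =>
      i + 1 ≤ 3 * r j ∧ ∀ l ∈ Finset.range 1, digitSeq b mu (i + l) = [b-1].getD l 0).card := by
    intro j
    have hsub : Finset.Ico (r j) (3 * r j) ⊆ (Finset.range (3 * r j)).filter fun i =>
        i + 1 ≤ 3 * r j ∧ ∀ l ∈ Finset.range 1, digitSeq b mu (i + l) = [b-1].getD l 0 := by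
      intro i hi
      obtain ⟨hi1, hi2⟩ := Finset.mem_Ico.mp hi
      rw [Finset.mem_filter]
      refine ⟨Finset.mem_range.mpr hi2, by omega, ?_⟩
      intro l hl
      rw [Finset.mem_range] at hl
      interval_cases l
      simpa using hdigits j i hi1 hi2
    calc 2 * r j = (Finset.Ico (r j) (3 * r j)).card := by rw [Nat.card_Ico]; omega
    _ ≤ _ := Finset.card_le_card hsub
  -- ratio bound
  have hratio : ∀ j, (2:ℝ)/3 ≤
      (((Finset.range (3 * r j)).filter fun i =>
        i + 1 ≤ 3 * r j ∧ ∀ l ∈ Finset.range 1, digitSeq b mu (i + l) = [b-1].getD l 0).card : ℝ)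
        / ((3 * r j : ℕ) : ℝ) := by
    intro j
    have h1 := hcount j
    have hr := hr1 j
    have hrR : (1:ℝ) ≤ (r j : ℝ) := by exact_mod_cast hr
    have h1R : (2 * (r j:ℝ)) ≤ (((Finset.range (3 * r j)).filter fun i =>
        i + 1 ≤ 3 * r j ∧ ∀ l ∈ Finset.range 1, digitSeq b mu (i + l) = [b-1].getD l 0).card : ℝ) := by
      exact_mod_cast h1
    rw [div_le_div_iff₀ (by norm_num) (by push_cast; linarith)]
    push_cast
    linarith
  -- tendsto composition
  have hmj : ∀ j : ℕ, j ≤ 3 * r j := by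
    intro j
    have := hre j
    calc j ≤ (j+3) * 16 := by nlinarith
    _ ≤ (j+3) * eF (k j) := Nat.mul_le_mul_left _ (hre j)
    _ ≤ 3 * ((j+3) * eF (k j)) := Nat.le_mul_of_pos_left _ (by omega)
  have hmtend : Tendsto (fun j => 3 * r j) atTop atTop :=
    tendsto_atTop_mono hmj tendsto_id
  have H2 := H1.comp hmtend
  have hlim : (2:ℝ)/3 ≤ 1 / b := by
    apply ge_of_tendsto H2
    filter_upwards with j
    simpa using hratio j
  have : (1:ℝ)/b ≤ 1/2 := by
    apply one_div_le_one_div_of_le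
    · norm_num
    · exact_mod_cast hb
  linarith

lemma mu_irrational : Irrational mu := by
  intro ⟨x, hx⟩
  set q : ℕ := x.den with hq
  set p : ℤ := x.num with hp
  have hq1 : 1 ≤ q := x.pos
  set K : ℕ := q + 5 with hK
  have hK5 : 5 ≤ K := by omega
  have hK2 : 2 ≤ K := by omega
  have hfK := f_cast_pos K
  have hfK1 := f_cast_pos (K+1)
  have hqR : (0:ℝ) < (q:ℝ) := by exact_mod_cast hq1
  have hmu_eq : mu = (p:ℝ) / (q:ℝ) := by
    rw [← hx, Rat.cast_def]
  have hlt := mu_lt_P K (by omega)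
  have hub := P_sub_mu K hK2
  have hprod := numA_prod K hK2
  set D : ℤ := (numA K : ℤ) * q - (martinF K : ℤ) * p with hD
  have hDpos : 0 < D := by
    have h0 : 0 < P K - mu := by linarith
    rw [hprod, hmu_eq] at h0
    have : 0 < ((numA K : ℝ) * q - (martinF K : ℝ) * p) / ((martinF K : ℝ) * q) := by
      rw [div_sub_div _ _ (ne_of_gt hfK) (ne_of_gt hqR)] at h0
      exact h0
    have h2 : 0 < (numA K : ℝ) * q - (martinF K : ℝ) * p := by
      rcases div_pos_iff.mp this with ⟨h2, _⟩ | ⟨_, hC⟩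
      · exact h2
      · exfalso
        have : (0:ℝ) < (martinF K:ℝ) * q := by positivity
        linarith
    have : (0:ℝ) < (D:ℤ) := by push_cast [hD]; push_cast at h2; linarith
    exact_mod_cast this
  have hD1 : (1:ℝ) ≤ (D:ℝ) := by exact_mod_cast hDpos
  have hPmu : P K - mu = (D:ℝ) / ((martinF K : ℝ) * q) := by
    rw [hprod, hmu_eq, div_sub_div _ _ (ne_of_gt hfK) (ne_of_gt hqR)]
    push_cast [hD]
    ring_nf
  have hlow : 1 / ((martinF K : ℝ) * q) ≤ P K - mu := by
    rw [hPmu]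
    exact (div_le_div_iff_of_pos_right (by positivity)).mpr hD1
  have hchain : 1 / ((martinF K : ℝ) * q) ≤ 2 / (martinF (K+1) : ℝ) := le_trans hlow hub
  have hfin : (martinF (K+1) : ℝ) ≤ 2 * ((martinF K : ℝ) * q) := by
    rw [div_le_div_iff₀ (by positivity) hfK1] at hchain
    linarith
  have hfinN : martinF (K+1) ≤ 2 * (martinF K * q) := by exact_mod_cast hfin
  have hcube := two_f_cube_le K hK5
  have hsq := f_ge_sq K hK2
  have hqlt : q < martinF K := by nlinarith
  have hcubeR : (2:ℝ) * (martinF K:ℝ)^3 ≤ 2*((martinF K:ℝ) * q) := by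
    exact_mod_cast le_trans hcube hfinN
  have hqR2 : (q:ℝ) < (martinF K:ℝ) := by exact_mod_cast hqlt
  have hf4 := f_cast_ge K hK2
  nlinarith [hcubeR, hqR2, hf4, mul_pos hfK hfK]

end MartinAux

theorem martin_absolutely_abnormal :
    (∀ n : ℕ, 3 ≤ n → (n - 1) ∣ martinF (n - 1) ∧ 0 < martinF (n - 1) / (n - 1)) ∧
      (∀ n : ℕ, 2 ≤ n → 0 < martinF n) ∧
      ∃ μ : ℝ,
        Tendsto (fun M : ℕ => ∏ m ∈ Finset.Icc 2 M, (1 - 1 / (martinF m : ℝ)))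
          atTop (nhds μ) ∧
        μ ∈ Set.Ioo (0 : ℝ) 1 ∧ Irrational μ ∧
        ∀ b : ℕ, 2 ≤ b → ¬ IsSimplyNormal b μ := by
  refine ⟨?_, ?_, MartinAux.mu, ?_, MartinAux.mu_mem, MartinAux.mu_irrational, ?_⟩
  · intro n hn
    have h2 : 2 ≤ n - 1 := by omega
    refine ⟨MartinAux.dvd_f (n-1) h2, ?_⟩
    apply Nat.div_pos ?_ (by omega)
    have := MartinAux.f_ge_sq (n-1) h2
    nlinarith [this]
  · intro n _
    exact MartinAux.f_pos n
  · exact MartinAux.tendsto_P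
  · exact fun b hb => MartinAux.not_simply_normal b hb
end

section
/- Let ω ∈ [0,1) be the real number whose base-4 digit sequence is the periodic repetition of the 32-digit block (3,3,3,2,3,1,3,0,2,3,2,2,2,1,2,0,1,3,1,2,1,1,1,0,0,3,0,2,0,1,0,0). Then ω is simply normal in base 4 but ω is not 4-pseudonormal. In particular, the inclusion of the set of 4-pseudonormal numbers in the set of simply 4-normal numbers is strict. -/
open Filter Topology

/-- The swap map `σ_b^{i,j}(ω) = Σ_n τ(d n) * b^{-(n+1)}`, where `τ` is the
transposition of the digits `i` and `j`. -/
noncomputable def swapMap (b i j : ℕ) (ω : ℝ) : ℝ :=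
  ∑' n : ℕ, ((Equiv.swap i j) (digitSeq b ω n) : ℝ) / (b : ℝ) ^ (n + 1)

/-- `Δ_b^{i,j}(ω) = ω - σ_b^{i,j}(ω)`. -/
noncomputable def deltaMap (b i j : ℕ) (ω : ℝ) : ℝ := ω - swapMap b i j ω

/-- The weight `w c`: the sum of the weights `1/(2b), 1/(2b), 1/(2b), 1/(2b),
(b-2)/(2b), (b-2)/(2b)` attached respectively to the values
`δ % b, (b-δ) % b, (δ-1) % b, (b-δ-1) % b, b-1, 0`, over those values equal to `c`. -/
noncomputable def pseudoWeight (b δ c : ℕ) : ℝ :=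
  (if δ % b = c then 1 / (2 * b) else 0) +
  (if (b - δ) % b = c then 1 / (2 * b) else 0) +
  (if (δ - 1) % b = c then 1 / (2 * b) else 0) +
  (if (b - δ - 1) % b = c then 1 / (2 * b) else 0) +
  (if b - 1 = c then ((b : ℝ) - 2) / (2 * b) else 0) +
  (if 0 = c then ((b : ℝ) - 2) / (2 * b) else 0)

/-- `ω` is `b`-pseudonormal: for all digits `i ≠ j` with `δ = |i - j|`, each digit
`c < b` has density `w c` in the base-`b` digit sequence of `|Δ_b^{i,j}(ω)|`. -/
def IsPseudonormal (b : ℕ) (ω : ℝ) : Prop :=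
  ∀ i j : ℕ, i < b → j < b → i ≠ j → ∀ c : ℕ, c < b →
    HasStrDensity (digitSeq b |deltaMap b i j ω|) [c]
      (pseudoWeight b (max i j - min i j) c)

/-! ### Auxiliary definitions -/

/-- The 32-digit block of `ω`. -/
def auxBl : List ℕ := [3,3,3,2,3,1,3,0,2,3,2,2,2,1,2,0,1,3,1,2,1,1,1,0,0,3,0,2,0,1,0,0]
/-- The block with digits 0 and 1 swapped. -/
def auxBl' : List ℕ := [3,3,3,2,3,0,3,1,2,3,2,2,2,0,2,1,0,3,0,2,0,0,0,1,1,3,1,2,1,0,1,1]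
/-- The 32-digit block of `|Δ|`. -/
def auxDl : List ℕ := [0,0,0,0,0,0,3,3,0,0,0,0,0,0,3,3,1,0,1,0,1,1,0,2,2,3,2,3,3,0,2,3]

def auxN : ℕ := 18364758544493064720
def auxM : ℕ := 18360536354271622725
def auxK : ℕ := 4222190221441995
def auxD : ℕ := 18446744073709551615

def auxPref : ℕ → ℤ
  | 0 => 0
  | n+1 => 4 * auxPref n + (auxBl.getD (n % 32) 0 : ℤ)

/-! ### Floor and digit lemmas -/

lemma aux_floor_four_mul (y : ℝ) : ⌊4 * y⌋ = 4 * ⌊y⌋ + ⌊4 * y⌋ % 4 := by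
  have h1 : (4:ℤ) * ⌊y⌋ ≤ ⌊4 * y⌋ := by
    have : ((4 * ⌊y⌋ : ℤ) : ℝ) ≤ 4 * y := by push_cast; nlinarith [Int.floor_le y]
    exact Int.le_floor.mpr this
  have h2 : ⌊4 * y⌋ < 4 * ⌊y⌋ + 4 := by
    have : (4:ℝ) * y < ((4 * ⌊y⌋ + 4 : ℤ) : ℝ) := by push_cast; nlinarith [Int.lt_floor_add_one y]
    exact Int.floor_lt.mpr this
  omega

lemma aux_digitSeq_int (b : ℕ) (hb : 0 < b) (x : ℝ) (n : ℕ) :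
    (digitSeq b x n : ℤ) = ⌊x * (b:ℝ) ^ (n+1)⌋ % (b:ℤ) := by
  unfold digitSeq
  exact Int.toNat_of_nonneg (Int.emod_nonneg _ (by exact_mod_cast hb.ne'))

lemma aux_floor_succ (x : ℝ) (n : ℕ) :
    ⌊x * 4 ^ (n+1)⌋ = 4 * ⌊x * 4 ^ n⌋ + (digitSeq 4 x n : ℤ) := by
  have h : x * 4 ^ (n+1) = 4 * (x * 4 ^ n) := by ring
  rw [aux_digitSeq_int 4 (by norm_num) x n]
  push_cast
  rw [h, aux_floor_four_mul (x * 4 ^ n)]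
  omega

lemma aux_digits_inj {x y : ℝ} (hx : x ∈ Set.Ico (0:ℝ) 1) (hy : y ∈ Set.Ico (0:ℝ) 1)
    (h : ∀ n, digitSeq 4 x n = digitSeq 4 y n) : x = y := by
  have hfl : ∀ n, ⌊x * 4 ^ n⌋ = ⌊y * 4 ^ n⌋ := by
    intro n
    induction n with
    | zero =>
      simp only [pow_zero, mul_one]
      rw [Int.floor_eq_zero_iff.mpr hx, Int.floor_eq_zero_iff.mpr hy]
    | succ n ih => rw [aux_floor_succ, aux_floor_succ, ih, h n]
  by_contra hne
  have habs : 0 < |x - y| := abs_pos.mpr (sub_ne_zero.mpr hne)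
  obtain ⟨n, hn⟩ := pow_unbounded_of_one_lt (1 / |x - y|) (by norm_num : (1:ℝ) < 4)
  have key : |x - y| * 4 ^ n < 1 := by
    have h1 := Int.floor_le (x * 4 ^ n)
    have h2 := Int.lt_floor_add_one (x * 4 ^ n)
    have h3 := Int.floor_le (y * 4 ^ n)
    have h4 := Int.lt_floor_add_one (y * 4 ^ n)
    rw [hfl n] at h1 h2
    have : |x * 4 ^ n - y * 4 ^ n| < 1 := by
      rw [abs_sub_lt_iff]; constructor <;> linarith
    calc |x - y| * 4 ^ n = |x * 4 ^ n - y * 4 ^ n| := by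
          rw [← sub_mul, abs_mul, abs_of_pos (by positivity : (0:ℝ) < (4:ℝ)^n)]
      _ < 1 := this
  have h5 : 1 / |x - y| < 4 ^ n := hn
  have h6 : (1:ℝ) < |x - y| * 4 ^ n := by
    rw [div_lt_iff₀ habs] at h5; linarith
  linarith

/-! ### The value of ω -/

section OmegaVal
variable {ω : ℝ} (hω : ω ∈ Set.Ico (0:ℝ) 1)
    (hdig : ∀ n : ℕ, digitSeq 4 ω n = auxBl.getD (n % 32) 0)
include hω hdig

lemma aux_omega_floor_pow (n : ℕ) : ⌊ω * 4 ^ n⌋ = auxPref n := by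
  induction n with
  | zero =>
    simp only [pow_zero, mul_one, auxPref]
    exact Int.floor_eq_zero_iff.mpr hω
  | succ n ih => rw [aux_floor_succ, ih, hdig n, auxPref]

lemma aux_omega_val : ω = (auxN : ℝ) / (auxD : ℝ) := by
  have h32 : ⌊ω * 4 ^ 32⌋ = (auxN : ℤ) := by
    rw [aux_omega_floor_pow hω hdig 32]; decide
  set x : ℝ := ω * 4 ^ 32 - auxN with hx
  have hx0 : x ∈ Set.Ico (0:ℝ) 1 := by
    have h1 := Int.floor_le (ω * 4 ^ 32)
    have h2 := Int.lt_floor_add_one (ω * 4 ^ 32)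
    rw [h32] at h1 h2
    constructor
    · simp only [hx]; push_cast at h1 ⊢; linarith
    · simp only [hx]; push_cast at h2 ⊢; linarith
  have hxd : ∀ n, digitSeq 4 x n = digitSeq 4 ω n := by
    intro n
    have hfe : ⌊x * 4 ^ (n+1)⌋ = ⌊ω * 4 ^ (n + 33)⌋ - (auxN : ℤ) * 4 ^ (n+1) := by
      have : x * 4 ^ (n+1) = ω * 4 ^ (n + 33) - ((auxN : ℤ) * 4 ^ (n+1) : ℤ) := by
        push_cast [hx]; ring
      rw [this, Int.floor_sub_intCast]
    have hdvd : (4:ℤ) ∣ (auxN : ℤ) * 4 ^ (n+1) := ⟨(auxN:ℤ) * 4 ^ n, by ring⟩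
    obtain ⟨t, ht⟩ := hdvd
    unfold digitSeq
    simp only [Nat.cast_ofNat]
    rw [hfe, ht]
    have hmod : (⌊ω * 4 ^ (n + 33)⌋ - 4 * t) % 4 = ⌊ω * 4 ^ (n + 33)⌋ % 4 := by omega
    rw [hmod]
    have hper : digitSeq 4 ω (n + 32) = digitSeq 4 ω n := by
      rw [hdig, hdig, Nat.add_mod_right]
    have h2 : (⌊ω * 4 ^ (n + 32 + 1)⌋ % 4).toNat = digitSeq 4 ω (n+32) := by
      unfold digitSeq; simp only [Nat.cast_ofNat]
    rw [show n + 33 = n + 32 + 1 from rfl, h2, hper]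
    unfold digitSeq; simp only [Nat.cast_ofNat]
  have hxe : x = ω := aux_digits_inj hx0 hω hxd
  have hD : (auxD : ℝ) = 4 ^ 32 - 1 := by norm_num [auxD]
  rw [hD]
  have hfin : ω * 4 ^ 32 - auxN = ω := hxe
  field_simp
  linarith

end OmegaVal

/-! ### Digits of ρ = K / D -/

noncomputable def auxRho : ℝ := (auxK : ℝ) / (auxD : ℝ)

lemma aux_rho_floor (n : ℕ) : ⌊auxRho * 4 ^ (n+1)⌋ = ((auxK * 4 ^ (n+1) / auxD : ℕ) : ℤ) := by
  have h : auxRho * 4 ^ (n+1) = (((auxK * 4 ^ (n+1) : ℕ) : ℚ) / ((auxD : ℕ) : ℚ) : ℚ) := by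
    unfold auxRho; push_cast; ring
  rw [h, Rat.floor_cast, Rat.floor_natCast_div_natCast]
  exact (Int.natCast_ediv _ _).symm

lemma aux_rho_digit_lt (n : ℕ) (hn : n < 32) : digitSeq 4 auxRho n = auxDl.getD n 0 := by
  unfold digitSeq
  rw [show ((4:ℕ):ℝ) = (4:ℝ) by norm_num, aux_rho_floor n]
  have hmod : ((auxK * 4 ^ (n+1) / auxD : ℕ) : ℤ) % ((4:ℕ):ℤ)
      = ((auxK * 4 ^ (n+1) / auxD % 4 : ℕ) : ℤ) := by
    push_cast; ring_nf
  rw [hmod, Int.toNat_natCast]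
  have key : ∀ m, m < 32 → auxK * 4 ^ (m + 1) / auxD % 4 = auxDl.getD m 0 := by decide
  exact key n hn

lemma aux_rho_digit_periodic (n : ℕ) : digitSeq 4 auxRho (n + 32) = digitSeq 4 auxRho n := by
  have key : auxRho * 4 ^ (n + 32 + 1) = (auxK : ℝ) * 4 ^ (n+1) + auxRho * 4 ^ (n+1) := by
    unfold auxRho
    have hD : (auxD : ℝ) = 4 ^ 32 - 1 := by norm_num [auxD]
    rw [hD]
    field_simp
    ring
  unfold digitSeq
  rw [show ((4:ℕ):ℝ) = (4:ℝ) by norm_num, key]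
  have hre : (auxK : ℝ) * 4 ^ (n+1) + auxRho * 4 ^ (n+1)
      = auxRho * 4 ^ (n+1) + ((auxK * 4 ^ (n+1) : ℤ) : ℝ) := by push_cast; ring
  rw [hre, Int.floor_add_intCast]
  obtain ⟨t, ht⟩ : (4:ℤ) ∣ (auxK : ℤ) * 4 ^ (n+1) := ⟨(auxK:ℤ) * 4 ^ n, by ring⟩
  rw [ht]
  congr 1
  omega

lemma aux_rho_digit (n : ℕ) : digitSeq 4 auxRho n = auxDl.getD (n % 32) 0 := by
  induction n using Nat.strong_induction_on with
  | _ n ih =>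
    by_cases h : n < 32
    · rw [Nat.mod_eq_of_lt h]; exact aux_rho_digit_lt n h
    · have h32 : n - 32 + 32 = n := by omega
      rw [← h32, aux_rho_digit_periodic, ih (n - 32) (by omega)]
      congr 1
      omega

/-! ### The value of the swap map -/

section Swap
variable {ω : ℝ} (hdig : ∀ n : ℕ, digitSeq 4 ω n = auxBl.getD (n % 32) 0)
include hdig

lemma aux_swap_digit (n : ℕ) :
    ((Equiv.swap 0 1) (digitSeq 4 ω n) : ℕ) = auxBl'.getD (n % 32) 0 := by
  rw [hdig]
  have key : ∀ m, m < 32 → (Equiv.swap 0 1) (auxBl.getD m 0) = auxBl'.getD m 0 := by decide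
  exact key _ (Nat.mod_lt n (by norm_num))

lemma aux_swapMap_val : swapMap 4 0 1 ω = (auxM : ℝ) / (auxD : ℝ) := by
  unfold swapMap
  have hfun : ∀ n : ℕ, ((((Equiv.swap 0 1) (digitSeq 4 ω n)) : ℕ) : ℝ) / ((4:ℕ) : ℝ) ^ (n + 1)
      = ((auxBl'.getD (n % 32) 0 : ℕ) : ℝ) / 4 ^ (n+1) := by
    intro n
    rw [aux_swap_digit hdig n]
    norm_num
  set g : ℕ → ℝ := fun n => ((auxBl'.getD (n % 32) 0 : ℕ) : ℝ) / 4 ^ (n+1) with hg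
  rw [tsum_congr hfun]
  have hbound : ∀ n : ℕ, g n ≤ 3 * (1/4:ℝ) ^ (n+1) := by
    intro n
    have h3 : (auxBl'.getD (n % 32) 0 : ℕ) ≤ 3 := by
      have key : ∀ m, m < 32 → auxBl'.getD m 0 ≤ 3 := by decide
      exact key _ (Nat.mod_lt n (by norm_num))
    have hrw : (3:ℝ) * (1/4)^(n+1) = 3 / 4^(n+1) := by rw [div_pow]; ring
    simp only [hg, hrw]
    gcongr
    exact_mod_cast h3
  have hnn : ∀ n : ℕ, 0 ≤ g n := fun n => by positivity
  have hsum : Summable g := by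
    apply Summable.of_nonneg_of_le hnn hbound
    have h0 : Summable (fun n : ℕ => (3 * (1/4)) * (1/4:ℝ)^n) :=
      (summable_geometric_of_lt_one (by norm_num) (by norm_num)).mul_left _
    exact h0.congr fun n => by rw [pow_succ]; ring
  have hshift : ∀ n : ℕ, g (n + 32) = g n * ((4:ℝ) ^ 32)⁻¹ := by
    intro n
    simp only [hg, Nat.add_mod_right]
    rw [div_eq_mul_inv, div_eq_mul_inv, pow_add (4:ℝ) (n+1) 32]
    ring_nf
  have heq := (hsum.sum_add_tsum_nat_add 32).symm
  have h2 : ∑' n : ℕ, g (n + 32) = (∑' n, g n) * ((4:ℝ) ^ 32)⁻¹ := by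
    rw [tsum_congr hshift, tsum_mul_right]
  set T := ∑' n, g n with hT
  have hS : ∑ i ∈ Finset.range 32, g i = (auxM : ℝ) / 4 ^ 32 := by
    simp only [hg]
    rw [Finset.sum_range_succ]
    norm_num [Finset.sum_range_succ, auxBl', auxM]
  rw [hS, h2] at heq
  have hD : (auxD : ℝ) = 4 ^ 32 - 1 := by norm_num [auxD]
  rw [hD]
  have h4 : (4:ℝ) ^ 32 ≠ 0 := by positivity
  field_simp at heq ⊢
  nlinarith [heq]

end Swap

/-! ### Density of a digit in a periodic sequence -/

lemma aux_density_of_periodic (d : ℕ → ℕ) (c t : ℕ) (ht : t ≤ 32)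
    (hcnt : ∀ a : ℕ, (((Finset.range 32).filter fun k => d (a + k) = c)).card = t) :
    HasStrDensity d [c] ((t : ℝ) / 32) := by
  classical
  set p : ℕ → Prop := fun i => d i = c with hp
  have hfilter : ∀ m : ℕ, ((Finset.range m).filter fun i =>
      i + ([c] : List ℕ).length ≤ m ∧ ∀ j ∈ Finset.range ([c] : List ℕ).length,
        d (i + j) = ([c] : List ℕ).getD j 0).card = Nat.count p m := by
    intro m
    rw [Nat.count_eq_card_filter_range]
    congr 1
    apply Finset.filter_congr
    intro i hi
    simp only [Finset.mem_range] at hi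
    simp [hp, hi, Nat.succ_le_of_lt hi]
  have hstep : ∀ a : ℕ, Nat.count p (a + 32) = Nat.count p a + t := by
    intro a
    rw [Nat.count_add]
    congr 1
    rw [Nat.count_eq_card_filter_range]
    exact hcnt a
  have hform : ∀ q r : ℕ, Nat.count p (32 * q + r) = q * t + Nat.count p r := by
    intro q
    induction q with
    | zero => simp
    | succ q ih =>
      intro r
      have h : 32 * (q + 1) + r = (32 * q + r) + 32 := by ring
      rw [h, hstep, ih]; ring
  have hcle : ∀ r : ℕ, Nat.count p r ≤ r := fun r => by
    rw [Nat.count_eq_card_filter_range]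
    exact (Finset.card_filter_le _ _).trans (by simp)
  unfold HasStrDensity
  rw [← tendsto_sub_nhds_zero_iff]
  refine squeeze_zero_norm' ?_ (tendsto_const_div_atTop_nhds_zero_nat 32)
  filter_upwards [eventually_ge_atTop 1] with m hm
  rw [Real.norm_eq_abs]
  have hm0 : (0:ℝ) < m := by exact_mod_cast hm
  rw [hfilter m]
  set q := m / 32 with hq
  set r := m % 32 with hr
  have hmqr : 32 * q + r = m := Nat.div_add_mod m 32
  have hcount : Nat.count p m = q * t + Nat.count p r := by rw [← hmqr, hform]
  set e := Nat.count p r with he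
  have her : e ≤ r := hcle r
  have hr32 : r < 32 := Nat.mod_lt m (by norm_num)
  have hinner : (Nat.count p m : ℝ) / m - (t:ℝ) / 32 = (32 * (e:ℝ) - (t:ℝ) * r) / (32 * m) := by
    have h1 : (Nat.count p m : ℝ) = q * t + e := by exact_mod_cast hcount
    have h2 : (m : ℝ) = 32 * q + r := by exact_mod_cast hmqr.symm
    rw [h1, div_sub_div _ _ (ne_of_gt hm0) (by norm_num : (32:ℝ) ≠ 0),
      div_eq_div_iff (by positivity) (by positivity), h2]
    ring
  have hkey : |(Nat.count p m : ℝ) / m - (t:ℝ) / 32| = |32 * (e:ℝ) - (t:ℝ) * (r:ℝ)| / (32 * m) := by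
    rw [hinner, abs_div, abs_of_pos (by positivity : (0:ℝ) < 32 * (m:ℝ))]
  rw [hkey]
  have hnum : |32 * (e:ℝ) - t * r| ≤ 1024 := by
    rw [abs_le]
    constructor
    · have hle : (t:ℝ) * r ≤ 32 * 32 := by
        have h1 : (t:ℝ) ≤ 32 := by exact_mod_cast ht
        have h2 : (r:ℝ) ≤ 32 := by exact_mod_cast hr32.le
        nlinarith [Nat.cast_nonneg (α := ℝ) t, Nat.cast_nonneg (α := ℝ) r]
      nlinarith [Nat.cast_nonneg (α := ℝ) e]
    · have h1 : (e:ℝ) ≤ 32 := by exact_mod_cast (her.trans hr32.le)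
      nlinarith [Nat.cast_nonneg (α := ℝ) t, Nat.cast_nonneg (α := ℝ) r]
  calc |32 * (e:ℝ) - t * r| / (32 * m) ≤ 1024 / (32 * m) := by gcongr
    _ = 32 / m := by rw [eq_div_iff (ne_of_gt hm0)]; field_simp; ring

lemma aux_density_of_block (d : ℕ → ℕ) (L : List ℕ)
    (hd : ∀ n, d n = L.getD (n % 32) 0) (c t : ℕ) (ht : t ≤ 32)
    (hb : ∀ b, b < 32 → ((Finset.range 32).filter fun k => L.getD ((b+k) % 32) 0 = c).card = t) :
    HasStrDensity d [c] ((t:ℝ)/32) := by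
  apply aux_density_of_periodic d c t ht
  intro a
  have hfe : ((Finset.range 32).filter fun k => d (a+k) = c) =
      ((Finset.range 32).filter fun k => L.getD ((a % 32 + k) % 32) 0 = c) := by
    apply Finset.filter_congr
    intro k hk
    simp only [Finset.mem_range] at hk
    rw [hd, Nat.add_mod a k 32, Nat.mod_eq_of_lt hk]
  rw [hfe]
  exact hb (a % 32) (Nat.mod_lt a (by norm_num))

/-! ### Main theorem -/

theorem simply_normal_not_pseudonormal_example (ω : ℝ) (hω : ω ∈ Set.Ico (0 : ℝ) 1)
    (hdig : ∀ n : ℕ, digitSeq 4 ω n =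
      [3, 3, 3, 2, 3, 1, 3, 0, 2, 3, 2, 2, 2, 1, 2, 0,
       1, 3, 1, 2, 1, 1, 1, 0, 0, 3, 0, 2, 0, 1, 0, 0].getD (n % 32) 0) :
    IsSimplyNormal 4 ω ∧ ¬ IsPseudonormal 4 ω := by
  have hdig' : ∀ n : ℕ, digitSeq 4 ω n = auxBl.getD (n % 32) 0 := hdig
  constructor
  · intro h hh
    have hval : (1 : ℝ) / ((4:ℕ) : ℝ) = ((8:ℕ) : ℝ) / 32 := by norm_num
    rw [hval]
    interval_cases h
    · exact aux_density_of_block _ auxBl hdig' 0 8 (by norm_num) (by decide)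
    · exact aux_density_of_block _ auxBl hdig' 1 8 (by norm_num) (by decide)
    · exact aux_density_of_block _ auxBl hdig' 2 8 (by norm_num) (by decide)
    · exact aux_density_of_block _ auxBl hdig' 3 8 (by norm_num) (by decide)
  · intro hpn
    have hΔ : |deltaMap 4 0 1 ω| = auxRho := by
      unfold deltaMap
      rw [aux_swapMap_val hdig', aux_omega_val hω hdig']
      unfold auxRho
      rw [abs_of_nonneg]
      · rw [div_sub_div_same]
        norm_num [auxN, auxM, auxK]
      · rw [div_sub_div_same]
        norm_num [auxN, auxM, auxD]
    have h1 := hpn 0 1 (by norm_num) (by norm_num) (by norm_num) 0 (by norm_num)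
    rw [hΔ] at h1
    have h2 : HasStrDensity (digitSeq 4 auxRho) [0] (((16:ℕ):ℝ)/32) :=
      aux_density_of_block _ auxDl aux_rho_digit 0 16 (by norm_num) (by decide)
    have huniq : pseudoWeight 4 (max 0 1 - min 0 1) 0 = ((16:ℕ):ℝ)/32 :=
      tendsto_nhds_unique h1 h2
    norm_num [pseudoWeight] at huniq
end
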